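/- arXiv:math/0608779 — 2 statements merged into one kernel-verified Lean document; each statement's English description precedes it below -/
import Mathlib

section
/- Let Γ be a cyclically reduced A-graph, W_Γ its Whitehead hypergraph, v ∈ Ã, Y a v-cut of Ã, and φ the Whitehead automorphism of the second kind specified by (v, Y). Then |φ(Γ)| − |Γ| = cap_{W_Γ}(Y) − deg_{W_Γ}(v). -/
/-- The symmetrized alphabet `Ã = A ∪ Ā`, encoded as `A × Bool`. -/
abbrev Letter (A : Type) := A × Bool

/-- The formal inverse (bar) involution on letters. -/
def Letter.bar {A : Type} (a : Letter A) : Letter A := (a.1, !a.2)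

/-- An `A`-graph: a finite set of vertices and a finite set of edges labeled by `Ã`. -/
structure AGraph (V A : Type) where
  verts : Finset V
  edges : Finset (V × Letter A × V)

namespace AGraph

variable {V A : Type} [DecidableEq V] [DecidableEq A]

/-- A dual `A`-graph: edges join vertices of the graph, and `(x,a,y)` is an edge iff
`(y,ā,x)` is. -/
def IsDual (Γ : AGraph V A) : Prop :=
  (∀ e ∈ Γ.edges, e.1 ∈ Γ.verts ∧ e.2.2 ∈ Γ.verts) ∧
  ∀ x a y, (x, a, y) ∈ Γ.edges ↔ (y, Letter.bar a, x) ∈ Γ.edges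

/-- The link of a vertex: the set of edges into it. -/
def link (Γ : AGraph V A) (x : V) : Finset (V × Letter A × V) :=
  Γ.edges.filter fun e => e.2.2 = x

/-- The hyperlink of a vertex: the set of labels of edges into it. -/
def hl (Γ : AGraph V A) (x : V) : Finset (Letter A) :=
  (Γ.link x).image fun e => e.2.1

/-- A reduced `A`-graph: dual, and two equally-labeled edges into the same vertex coincide. -/
def IsReduced (Γ : AGraph V A) : Prop :=
  Γ.IsDual ∧ ∀ x x' a y, (x, a, y) ∈ Γ.edges → (x', a, y) ∈ Γ.edges → x = x'

/-- A cyclically reduced `A`-graph: reduced, and every vertex has at least two incoming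
edges. -/
def IsCyclRed (Γ : AGraph V A) : Prop :=
  Γ.IsReduced ∧ ∀ x ∈ Γ.verts, 2 ≤ (Γ.link x).card

/-- Rename vertices along a map. -/
def rename (f : V → V) (Γ : AGraph V A) : AGraph V A :=
  ⟨Γ.verts.image f, Γ.edges.image fun e => (f e.1, e.2.1, f e.2.2)⟩

/-- An elementary reduction: identify the sources of two distinct equally-labeled edges
pointing to the same vertex. -/
def ElemRed (Γ Γ' : AGraph V A) : Prop :=
  ∃ x y a z, x ≠ y ∧ (x, a, z) ∈ Γ.edges ∧ (y, a, z) ∈ Γ.edges ∧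
    Γ' = rename (fun w => if w = y then x else w) Γ

/-- `Δ` is the reduction of `Γ`: obtained by a sequence of elementary reductions,
and reduced. -/
def ReducesTo (Γ Δ : AGraph V A) : Prop :=
  Relation.ReflTransGen ElemRed Γ Δ ∧ Δ.IsReduced

/-- An endpoint: a vertex whose hyperlink has at most one element. -/
def IsEndpoint (Γ : AGraph V A) (x : V) : Prop :=
  x ∈ Γ.verts ∧ (Γ.hl x).card ≤ 1

/-- Remove a vertex and all adjacent edges. -/
def removeV (Γ : AGraph V A) (x : V) : AGraph V A :=
  ⟨Γ.verts.erase x, Γ.edges.filter fun e => e.1 ≠ x ∧ e.2.2 ≠ x⟩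

/-- An elementary trimming: removal of an endpoint and its adjacent edges. -/
def ElemTrim (Γ Γ' : AGraph V A) : Prop :=
  ∃ x, Γ.IsEndpoint x ∧ Γ' = Γ.removeV x

/-- `Δ` is the cyclic core of `Γ`: obtained by a sequence of elementary trimmings,
and without endpoints. -/
def CoreOf (Γ Δ : AGraph V A) : Prop :=
  Relation.ReflTransGen ElemTrim Γ Δ ∧ ∀ x, ¬ Δ.IsEndpoint x

/-- The capacity of `Y ⊆ Ã` in the Whitehead hypergraph `W_Γ`: the number of hyperedges
(one per vertex `x` of `Γ`, with image the hyperlink of `x`) meeting both `Y` and its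
complement. -/
def cap (Γ : AGraph V A) (Y : Finset (Letter A)) : ℕ :=
  (Γ.verts.filter fun x => (Γ.hl x ∩ Y).Nonempty ∧ (Γ.hl x \ Y).Nonempty).card

/-- The degree of `v ∈ Ã` in the Whitehead hypergraph `W_Γ`: the number of hyperedges
containing `v`. -/
def deg (Γ : AGraph V A) (v : Letter A) : ℕ :=
  (Γ.verts.filter fun x => v ∈ Γ.hl x).card

end AGraph

/-- The image of a letter under the Whitehead automorphism specified by `(v, Y)`,
as a word: `φ(v) = v`, `φ(v̄) = v̄`, and `φ(a) = v^γ a v^ρ` otherwise. -/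
def wImage {A : Type} [DecidableEq A] (v : Letter A) (Y : Finset (Letter A))
    (a : Letter A) : List (Letter A) :=
  if a = v ∨ a = Letter.bar v then [a]
  else (if Letter.bar a ∈ Y then [Letter.bar v] else []) ++ [a] ++ (if a ∈ Y then [v] else [])

/-- Vertex type for the substituted graph: original vertices plus at most two midpoints
per edge. -/
abbrev SV (V A : Type) := V ⊕ ((V × Letter A × V) × Fin 2)

instance {V A : Type} [DecidableEq V] [DecidableEq A] : DecidableEq (SV V A) :=
  inferInstanceAs (DecidableEq (V ⊕ ((V × Letter A × V) × Fin 2)))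

/-- The path (with its dual edges) replacing the edge `e`, whose label word is `w`
(of length 1, 2 or 3). -/
def pathEdges {V A : Type} [DecidableEq V] [DecidableEq A] (e : V × Letter A × V)
    (w : List (Letter A)) : Finset (SV V A × Letter A × SV V A) :=
  let x : SV V A := Sum.inl e.1
  let y : SV V A := Sum.inl e.2.2
  let m0 : SV V A := Sum.inr (e, 0)
  let m1 : SV V A := Sum.inr (e, 1)
  match w with
  | [c] => {(x, c, y), (y, Letter.bar c, x)}
  | [c1, c2] => {(x, c1, m0), (m0, Letter.bar c1, x), (m0, c2, y), (y, Letter.bar c2, m0)}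
  | [c1, c2, c3] => {(x, c1, m0), (m0, Letter.bar c1, x), (m0, c2, m1), (m1, Letter.bar c2, m0),
      (m1, c3, y), (y, Letter.bar c3, m1)}
  | _ => ∅

/-- The graph obtained from `Γ` by replacing each (positively labeled) edge by a path
labeled by the image of its label under the Whitehead automorphism specified by `(v, Y)`
(together with the dual edges). The Whitehead automorphism acts on a cyclically reduced
graph by this substitution followed by reduction and taking the cyclic core. -/
def whSubst {V A : Type} [DecidableEq V] [DecidableEq A] (v : Letter A)
    (Y : Finset (Letter A)) (Γ : AGraph V A) : AGraph (SV V A) A :=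
  let E := (Γ.edges.filter fun e => e.2.1.2 = true).biUnion
    (fun e => pathEdges e (wImage v Y e.2.1))
  ⟨Γ.verts.image Sum.inl ∪ E.biUnion (fun d => {d.1, d.2.2}), E⟩


/-! ### Auxiliary machinery for the proof -/

set_option linter.unusedSectionVars false

namespace Gersten

open AGraph

variable {W A : Type} [DecidableEq W] [DecidableEq A]

/-- The folding equivalence generated by an edge set: two vertices are related if they
are forced to be identified in any reduction. -/
inductive Fold (E : Finset (W × Letter A × W)) : W → W → Prop
  | refl (x : W) : Fold E x x
  | symm {x y : W} : Fold E x y → Fold E y x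
  | trans {x y z : W} : Fold E x y → Fold E y z → Fold E x z
  | step {x y z z' : W} (a : Letter A) : (x, a, z) ∈ E → (y, a, z') ∈ E →
      Fold E z z' → Fold E x y

lemma Fold.eq_of_reduced {E : Finset (W × Letter A × W)}
    (hE : ∀ x x' a y, (x, a, y) ∈ E → (x', a, y) ∈ E → x = x') {u w : W}
    (h : Fold E u w) : u = w := by
  induction h with
  | refl => rfl
  | symm _ ih => exact ih.symm
  | trans _ _ ih1 ih2 => exact ih1.trans ih2
  | step a h1 h2 _ ih => subst ih; exact hE _ _ _ _ h1 h2

lemma Fold.map {E : Finset (W × Letter A × W)} (f : W → W) {u w : W} (h : Fold E u w) :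
    Fold (E.image fun e => (f e.1, e.2.1, f e.2.2)) (f u) (f w) := by
  induction h with
  | refl x => exact .refl _
  | symm _ ih => exact .symm ih
  | trans _ _ ih1 ih2 => exact .trans ih1 ih2
  | step a h1 h2 _ ih =>
      exact .step a (Finset.mem_image_of_mem _ h1) (Finset.mem_image_of_mem _ h2) ih

lemma Fold.pullback {E : Finset (W × Letter A × W)} (f : W → W)
    (H : ∀ p q, f p = f q → Fold E p q) {a b : W}
    (h : Fold (E.image fun e => (f e.1, e.2.1, f e.2.2)) a b) :
    (∀ u w, f u = a → f w = b → Fold E u w) ∧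
      (a = b ∨ ((∃ u, f u = a) ∧ ∃ w, f w = b)) := by
  induction h with
  | refl x => exact ⟨fun u w hu hw => H u w (hu.trans hw.symm), Or.inl rfl⟩
  | symm h ih =>
      refine ⟨fun u w hu hw => (ih.1 w u hw hu).symm, ?_⟩
      rcases ih.2 with h' | ⟨h1, h2⟩
      · exact Or.inl h'.symm
      · exact Or.inr ⟨h2, h1⟩
  | @trans a y b h1 h2 ih1 ih2 =>
      rcases ih1.2 with rfl | ⟨ha, ⟨w', hw'⟩⟩
      · exact ih2
      rcases ih2.2 with rfl | ⟨_, h2r⟩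
      · exact ih1
      exact ⟨fun u w hu hw => (ih1.1 u w' hu hw').trans (ih2.1 w' w hw' hw),
        Or.inr ⟨ha, h2r⟩⟩
  | @step x y z z' c h1 h2 h3 ih =>
      rcases Finset.mem_image.mp h1 with ⟨e1, he1, heq1⟩
      rcases Finset.mem_image.mp h2 with ⟨e2, he2, heq2⟩
      obtain ⟨u1, c1, t1⟩ := e1
      obtain ⟨u2, c2, t2⟩ := e2
      simp only [Prod.mk.injEq] at heq1 heq2
      obtain ⟨hu1, rfl, ht1⟩ := heq1
      obtain ⟨hu2, rfl, ht2⟩ := heq2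
      have hf : Fold E t1 t2 := ih.1 t1 t2 ht1 ht2
      have hxy : Fold E u1 u2 := .step _ he1 he2 hf
      refine ⟨fun u w hu hw => ?_, Or.inr ⟨⟨u1, hu1⟩, ⟨u2, hu2⟩⟩⟩
      exact .trans (.trans (H u u1 (hu.trans hu1.symm)) hxy) (H u2 w (hu2.trans hw.symm))


lemma rename_id (G : AGraph W A) : AGraph.rename id G = G := by
  cases G with
  | mk verts edges =>
      unfold AGraph.rename
      congr 1
      · exact Finset.image_id
      · have : (fun (e : W × Letter A × W) => (id e.1, e.2.1, id e.2.2)) = id := by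
          funext e; rfl
        rw [this, Finset.image_id]

lemma rename_comp (f g : W → W) (G : AGraph W A) :
    AGraph.rename g (AGraph.rename f G) = AGraph.rename (g ∘ f) G := by
  unfold AGraph.rename
  congr 1
  · exact Finset.image_image
  · rw [Finset.image_image]; rfl

lemma exists_rename_of_reds {G Δ : AGraph W A}
    (h : Relation.ReflTransGen AGraph.ElemRed G Δ) :
    ∃ F : W → W, Δ = AGraph.rename F G ∧ ∀ p q, F p = F q → Fold G.edges p q := by
  induction h with
  | refl => exact ⟨id, (rename_id G).symm, fun p q h => (show p = q from h) ▸ Fold.refl _⟩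
  | tail hchain hstep ih =>
      obtain ⟨F, rfl, HF⟩ := ih
      obtain ⟨x, y, a, z, hxy, h1, h2, rfl⟩ := hstep
      set f : W → W := fun w => if w = y then x else w with hf
      refine ⟨f ∘ F, (rename_comp F f G), fun p q hpq => ?_⟩
      have key : ∀ a' b' : W, f a' = f b' → a' = b' ∨ (a' = x ∧ b' = y) ∨ (a' = y ∧ b' = x) := by
        intro a' b' h'
        by_cases ha : a' = y <;> by_cases hb : b' = y
        · exact Or.inl (ha.trans hb.symm)
        · simp only [hf, ha, hb, if_true, if_false] at h'
          exact Or.inr (Or.inr ⟨ha, h'.symm⟩)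
        · simp only [hf, ha, hb, if_true, if_false] at h'
          exact Or.inr (Or.inl ⟨h', hb⟩)
        · simp only [hf, ha, hb, if_false] at h'
          exact Or.inl h'
      have hfoldxy : Fold (AGraph.rename F G).edges x y :=
        Fold.step a h1 h2 (Fold.refl z)
      have hpull := Fold.pullback (E := G.edges) F HF
        (by simpa [AGraph.rename] using hfoldxy)
      rcases key _ _ hpq with h' | ⟨h1', h2'⟩ | ⟨h1', h2'⟩
      · exact HF _ _ h'
      · exact hpull.1 p q h1' h2'
      · exact (hpull.1 q p h2' h1').symm

lemma rename_eq_iff_fold {G Δ : AGraph W A}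
    (hred : Relation.ReflTransGen AGraph.ElemRed G Δ) (hΔ : Δ.IsReduced) :
    ∃ F : W → W, Δ = AGraph.rename F G ∧ ∀ u w, (F u = F w ↔ Fold G.edges u w) := by
  obtain ⟨F, rfl, HF⟩ := exists_rename_of_reds hred
  refine ⟨F, rfl, fun u w => ⟨HF u w, fun h => ?_⟩⟩
  have := Fold.map F h
  exact Fold.eq_of_reduced (fun x x' a y hx hx' => hΔ.2 x x' a y
    (by simpa [AGraph.rename] using hx) (by simpa [AGraph.rename] using hx')) this

lemma card_image_eq_of_iff {α β γ : Type} [DecidableEq α] [DecidableEq β] [DecidableEq γ]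
    {s : Finset α} {f : α → β} {g : α → γ}
    (h : ∀ u ∈ s, ∀ w ∈ s, (f u = f w ↔ g u = g w)) :
    (s.image f).card = (s.image g).card := by
  induction s using Finset.induction_on with
  | empty => simp
  | @insert a s ha ih =>
      have h' : ∀ u ∈ s, ∀ w ∈ s, (f u = f w ↔ g u = g w) := fun u hu w hw =>
        h u (Finset.mem_insert_of_mem hu) w (Finset.mem_insert_of_mem hw)
      have hmem : f a ∈ s.image f ↔ g a ∈ s.image g := by
        simp only [Finset.mem_image]
        constructor
        · rintro ⟨u, hu, hu'⟩
          exact ⟨u, hu, ((h u (Finset.mem_insert_of_mem hu) a (Finset.mem_insert_self a s)).1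
            hu').symm ▸ rfl⟩
        · rintro ⟨u, hu, hu'⟩
          exact ⟨u, hu, ((h u (Finset.mem_insert_of_mem hu) a (Finset.mem_insert_self a s)).2
            hu')⟩
      rw [Finset.image_insert, Finset.image_insert]
      by_cases hfa : f a ∈ s.image f
      · rw [Finset.insert_eq_self.2 hfa, Finset.insert_eq_self.2 (hmem.1 hfa), ih h']
      · rw [Finset.card_insert_of_notMem hfa,
          Finset.card_insert_of_notMem (fun hg => hfa (hmem.2 hg)), ih h']

end Gersten

section Main

variable {V A : Type} [DecidableEq V] [DecidableEq A]

lemma Letter.bar_bar (a : Letter A) : Letter.bar (Letter.bar a) = a := by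
  simp [Letter.bar]

lemma Letter.bar_ne (a : Letter A) : Letter.bar a ≠ a := by
  simp [Letter.bar, Prod.ext_iff]

lemma Letter.bar_inj {a b : Letter A} (h : Letter.bar a = Letter.bar b) : a = b := by
  have := congrArg Letter.bar h
  rwa [Letter.bar_bar, Letter.bar_bar] at this

variable (Γ : AGraph V A) (v : Letter A) (Y : Finset (Letter A))

/-- Whether a vertex is absorbed: it is the source of a `v`-labeled edge. -/
def Absorbed (z : V) : Prop := ∃ x, (z, v, x) ∈ Γ.edges

open scoped Classical in
/-- The canonical collapsing map for the folded substituted graph. -/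
noncomputable def cfun : SV V A → (V ⊕ V) := fun u =>
  match u with
  | Sum.inl z => if h : Absorbed Γ v z then Sum.inr h.choose else Sum.inl z
  | Sum.inr (e, k) =>
      if k = 0 ∧ Letter.bar e.2.1 ∈ Y ∧ e.2.1 ≠ v ∧ e.2.1 ≠ Letter.bar v then Sum.inr e.1
      else Sum.inr e.2.2

variable {Γ v Y}

section Basic

variable (hΓ : Γ.IsCyclRed)
include hΓ

lemma hdual : ∀ x a y, (x, a, y) ∈ Γ.edges ↔ (y, Letter.bar a, x) ∈ Γ.edges := hΓ.1.1.2

lemma hends : ∀ e ∈ Γ.edges, e.1 ∈ Γ.verts ∧ e.2.2 ∈ Γ.verts := hΓ.1.1.1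

lemma hsrc : ∀ {x x' : V} {a : Letter A} {y : V},
    (x, a, y) ∈ Γ.edges → (x', a, y) ∈ Γ.edges → x = x' :=
  fun h h' => hΓ.1.2 _ _ _ _ h h'

lemma htgt : ∀ {z : V} {a : Letter A} {x x' : V},
    (z, a, x) ∈ Γ.edges → (z, a, x') ∈ Γ.edges → x = x' := by
  intro z a x x' h h'
  exact hsrc hΓ ((hdual hΓ _ _ _).1 h) ((hdual hΓ _ _ _).1 h')

lemma cfun_inl_abs {z x : V} (h : (z, v, x) ∈ Γ.edges) :
    cfun Γ v Y (Sum.inl z) = Sum.inr x := by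
  have habs : Absorbed Γ v z := ⟨x, h⟩
  simp only [cfun, dif_pos habs]
  exact congrArg _ (htgt hΓ habs.choose_spec h)

omit hΓ in
lemma cfun_inl_nabs {z : V} (h : ¬ Absorbed Γ v z) :
    cfun Γ v Y (Sum.inl z) = Sum.inl z := by
  simp only [cfun, dif_neg h]

lemma cfun_inl_cases (z : V) :
    cfun Γ v Y (Sum.inl z) = Sum.inl z ∨
      ∃ x, (z, v, x) ∈ Γ.edges ∧ cfun Γ v Y (Sum.inl z) = Sum.inr x := by
  by_cases h : Absorbed Γ v z
  · obtain ⟨x, hx⟩ := h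
    exact Or.inr ⟨x, hx, cfun_inl_abs hΓ hx⟩
  · exact Or.inl (cfun_inl_nabs h)

lemma cfun_inl_eq_inl {z x : V} (h : cfun Γ v Y (Sum.inl z) = Sum.inl x) : z = x := by
  rcases cfun_inl_cases (Γ := Γ) (v := v) (Y := Y) hΓ z with h' | ⟨x', _, h'⟩
  · rw [h'] at h; exact Sum.inl_injective h
  · rw [h'] at h; exact absurd h (by simp)

lemma cinl_inj {t t' : V} (h : cfun Γ v Y (Sum.inl t) = cfun Γ v Y (Sum.inl t')) :
    t = t' := by
  rcases cfun_inl_cases (Γ := Γ) (v := v) (Y := Y) hΓ t with h1 | ⟨x, hx, h1⟩ <;>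
    rcases cfun_inl_cases (Γ := Γ) (v := v) (Y := Y) hΓ t' with h2 | ⟨x', hx', h2⟩ <;>
      rw [h1, h2] at h
  · exact Sum.inl_injective h
  · exact absurd h (by simp)
  · exact absurd h (by simp)
  · have : x = x' := Sum.inr_injective h
    subst this
    exact hsrc hΓ hx hx'

omit hΓ in
lemma cfun_mid (e : V × Letter A × V) (k : Fin 2) :
    cfun Γ v Y (Sum.inr (e, k)) =
      (if k = 0 ∧ Letter.bar e.2.1 ∈ Y ∧ e.2.1 ≠ v ∧ e.2.1 ≠ Letter.bar v
        then Sum.inr e.1 else Sum.inr e.2.2) := by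
  rfl

omit hΓ in
lemma hl_mem_iff {b : Letter A} {x : V} : b ∈ Γ.hl x ↔ ∃ s, (s, b, x) ∈ Γ.edges := by
  simp only [AGraph.hl, AGraph.link, Finset.mem_image, Finset.mem_filter]
  constructor
  · rintro ⟨⟨s, c, t⟩, ⟨he, ht⟩, hb⟩
    simp only at hb ht
    subst hb; subst ht
    exact ⟨s, he⟩
  · rintro ⟨s, hs⟩
    exact ⟨(s, b, x), ⟨hs, rfl⟩, rfl⟩

lemma hl_card_ge {x : V} (hx : x ∈ Γ.verts) : 2 ≤ (Γ.hl x).card := by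
  have hinj : Set.InjOn (fun e : V × Letter A × V => e.2.1) (Γ.link x) := by
    rintro ⟨s, c, t⟩ h1 ⟨s', c', t'⟩ h2 hcc
    simp only [AGraph.link, Finset.mem_coe, Finset.mem_filter] at h1 h2
    simp only at hcc
    subst hcc
    obtain ⟨h1e, h1t⟩ := h1
    obtain ⟨h2e, h2t⟩ := h2
    subst h1t
    subst h2t
    have := hsrc hΓ h1e h2e
    subst this
    rfl
  rw [AGraph.hl, Finset.card_image_of_injOn hinj]
  exact hΓ.2 x hx

end Basic

variable (Γ v Y) in
/-- The `c`-image of the endpoint of the `a`-carrying edge at a vertex. -/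
noncomputable def sig (t : V) (a : Letter A) : V ⊕ V :=
  if a ∈ Y then Sum.inr t else cfun Γ v Y (Sum.inl t)

variable (Γ v Y) in
/-- Classification of the `c`-images of edges of the substituted graph. -/
def QE (P : V ⊕ V) (b : Letter A) (Q : V ⊕ V) : Prop :=
  (∃ s t, (s, b, t) ∈ Γ.edges ∧ b ≠ v ∧ b ≠ Letter.bar v ∧
      P = sig Γ v Y s (Letter.bar b) ∧ Q = sig Γ v Y t b) ∨
  (∃ s a t, (s, a, t) ∈ Γ.edges ∧ a ∈ Y ∧ b = v ∧
      P = Sum.inr t ∧ Q = cfun Γ v Y (Sum.inl t)) ∨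
  (∃ s a t, (s, a, t) ∈ Γ.edges ∧ a ∈ Y ∧ b = Letter.bar v ∧
      P = cfun Γ v Y (Sum.inl t) ∧ Q = Sum.inr t)

section Class

variable (hΓ : Γ.IsCyclRed) (hvY : v ∈ Y) (hv' : Letter.bar v ∉ Y)
include hΓ hvY hv'

lemma qe_of_mem {p q : SV V A} {b : Letter A}
    (h : (p, b, q) ∈ (whSubst v Y Γ).edges) :
    QE Γ v Y (cfun Γ v Y p) b (cfun Γ v Y q) := by
  simp only [whSubst, Finset.mem_biUnion, Finset.mem_filter] at h
  obtain ⟨e, ⟨he, hpos⟩, hmem⟩ := h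
  obtain ⟨z, a, x⟩ := e
  have hd : (x, Letter.bar a, z) ∈ Γ.edges := (hdual hΓ z a x).1 he
  by_cases hva : a = v ∨ a = Letter.bar v
  · have hw : wImage v Y a = [a] := by simp [wImage, hva]
    rw [hw] at hmem
    simp only [pathEdges, Finset.mem_insert, Finset.mem_singleton, Prod.mk.injEq] at hmem
    rcases hva with rfl | rfl
    · rcases hmem with ⟨rfl, rfl, rfl⟩ | ⟨rfl, rfl, rfl⟩
      · exact Or.inr (Or.inl ⟨z, _, x, he, hvY, rfl, cfun_inl_abs hΓ he, rfl⟩)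
      · exact Or.inr (Or.inr ⟨z, _, x, he, hvY, rfl, rfl, cfun_inl_abs hΓ he⟩)
    · have hd' : (x, v, z) ∈ Γ.edges := by rwa [Letter.bar_bar] at hd
      rcases hmem with ⟨rfl, rfl, rfl⟩ | ⟨rfl, rfl, rfl⟩
      · exact Or.inr (Or.inr ⟨x, v, z, hd', hvY, rfl, rfl, cfun_inl_abs hΓ hd'⟩)
      · rw [Letter.bar_bar]
        exact Or.inr (Or.inl ⟨x, v, z, hd', hvY, rfl, cfun_inl_abs hΓ hd', rfl⟩)
  · push_neg at hva
    obtain ⟨hav, hav'⟩ := hva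
    have hbav : Letter.bar a ≠ v := fun h' => hav' (by rw [← h', Letter.bar_bar])
    have hbav' : Letter.bar a ≠ Letter.bar v := fun h' => hav (Letter.bar_inj h')
    have hwimg : wImage v Y a =
        (if Letter.bar a ∈ Y then [Letter.bar v] else []) ++ [a] ++
          (if a ∈ Y then [v] else []) := by
      simp [wImage, hav, hav']
    by_cases h1 : Letter.bar a ∈ Y <;> by_cases h2 : a ∈ Y
    · -- word [v̄, a, v]
      rw [hwimg] at hmem
      simp only [h1, h2, if_true] at hmem
      have cm0 : cfun Γ v Y (Sum.inr ((z, a, x), (0 : Fin 2))) = Sum.inr z := by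
        simp [cfun_mid, h1, hav, hav']
      have cm1 : cfun Γ v Y (Sum.inr ((z, a, x), (1 : Fin 2))) = Sum.inr x := by
        simp [cfun_mid]
      simp only [List.append_assoc, List.cons_append, List.nil_append, pathEdges,
        Finset.mem_insert, Finset.mem_singleton, Prod.mk.injEq] at hmem
      rcases hmem with ⟨rfl, rfl, rfl⟩ | ⟨rfl, rfl, rfl⟩ | ⟨rfl, rfl, rfl⟩ |
        ⟨rfl, rfl, rfl⟩ | ⟨rfl, rfl, rfl⟩ | ⟨rfl, rfl, rfl⟩
      · exact Or.inr (Or.inr ⟨x, Letter.bar a, z, hd, h1, rfl, rfl, cm0⟩)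
      · rw [Letter.bar_bar]
        exact Or.inr (Or.inl ⟨x, Letter.bar a, z, hd, h1, rfl, cm0, rfl⟩)
      · refine Or.inl ⟨z, x, he, hav, hav', ?_, ?_⟩
        · rw [cm0]; simp [sig, h1]
        · rw [cm1]; simp [sig, h2]
      · refine Or.inl ⟨x, z, hd, hbav, hbav', ?_, ?_⟩
        · rw [cm1, Letter.bar_bar]; simp [sig, h2]
        · rw [cm0]; simp [sig, h1]
      · exact Or.inr (Or.inl ⟨z, a, x, he, h2, rfl, cm1, rfl⟩)
      · exact Or.inr (Or.inr ⟨z, a, x, he, h2, rfl, rfl, cm1⟩)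
    · -- word [v̄, a]
      rw [hwimg] at hmem
      simp only [h1, h2, if_true, if_false] at hmem
      have cm0 : cfun Γ v Y (Sum.inr ((z, a, x), (0 : Fin 2))) = Sum.inr z := by
        simp [cfun_mid, h1, hav, hav']
      simp only [List.append_assoc, List.cons_append, List.nil_append, List.append_nil,
        pathEdges, Finset.mem_insert, Finset.mem_singleton, Prod.mk.injEq] at hmem
      rcases hmem with ⟨rfl, rfl, rfl⟩ | ⟨rfl, rfl, rfl⟩ | ⟨rfl, rfl, rfl⟩ | ⟨rfl, rfl, rfl⟩
      · exact Or.inr (Or.inr ⟨x, Letter.bar a, z, hd, h1, rfl, rfl, cm0⟩)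
      · rw [Letter.bar_bar]
        exact Or.inr (Or.inl ⟨x, Letter.bar a, z, hd, h1, rfl, cm0, rfl⟩)
      · refine Or.inl ⟨z, x, he, hav, hav', ?_, ?_⟩
        · rw [cm0]; simp [sig, h1]
        · simp [sig, h2]
      · refine Or.inl ⟨x, z, hd, hbav, hbav', ?_, ?_⟩
        · rw [Letter.bar_bar]; simp [sig, h2]
        · rw [cm0]; simp [sig, h1]
    · -- word [a, v]
      rw [hwimg] at hmem
      simp only [h1, h2, if_true, if_false] at hmem
      have cm0 : cfun Γ v Y (Sum.inr ((z, a, x), (0 : Fin 2))) = Sum.inr x := by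
        simp [cfun_mid, h1]
      simp only [List.append_assoc, List.cons_append, List.nil_append,
        pathEdges, Finset.mem_insert, Finset.mem_singleton, Prod.mk.injEq] at hmem
      rcases hmem with ⟨rfl, rfl, rfl⟩ | ⟨rfl, rfl, rfl⟩ | ⟨rfl, rfl, rfl⟩ | ⟨rfl, rfl, rfl⟩
      · refine Or.inl ⟨z, x, he, hav, hav', ?_, ?_⟩
        · simp [sig, h1]
        · rw [cm0]; simp [sig, h2]
      · refine Or.inl ⟨x, z, hd, hbav, hbav', ?_, ?_⟩
        · rw [cm0, Letter.bar_bar]; simp [sig, h2]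
        · simp [sig, h1]
      · exact Or.inr (Or.inl ⟨z, a, x, he, h2, rfl, cm0, rfl⟩)
      · exact Or.inr (Or.inr ⟨z, a, x, he, h2, rfl, rfl, cm0⟩)
    · -- word [a]
      rw [hwimg] at hmem
      simp only [h1, h2, if_false] at hmem
      simp only [List.append_assoc, List.cons_append, List.nil_append, List.append_nil,
        pathEdges, Finset.mem_insert, Finset.mem_singleton, Prod.mk.injEq] at hmem
      rcases hmem with ⟨rfl, rfl, rfl⟩ | ⟨rfl, rfl, rfl⟩
      · refine Or.inl ⟨z, x, he, hav, hav', ?_, ?_⟩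
        · simp [sig, h1]
        · simp [sig, h2]
      · refine Or.inl ⟨x, z, hd, hbav, hbav', ?_, ?_⟩
        · rw [Letter.bar_bar]; simp [sig, h2]
        · simp [sig, h1]

end Class

section Class2

variable (hΓ : Γ.IsCyclRed) (hvY : v ∈ Y) (hv' : Letter.bar v ∉ Y)
include hΓ hvY hv'

lemma sig_inj {t t' : V} {a : Letter A} (h : sig Γ v Y t a = sig Γ v Y t' a) : t = t' := by
  unfold sig at h
  split_ifs at h
  · exact Sum.inr_injective h
  · exact cinl_inj hΓ h

lemma cfun_step {u t u' t' : SV V A} {b : Letter A}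
    (h : (u, b, t) ∈ (whSubst v Y Γ).edges) (h' : (u', b, t') ∈ (whSubst v Y Γ).edges)
    (htt : cfun Γ v Y t = cfun Γ v Y t') : cfun Γ v Y u = cfun Γ v Y u' := by
  have q1 := qe_of_mem hΓ hvY hv' h
  have q2 := qe_of_mem hΓ hvY hv' h'
  rcases q1 with ⟨s1, t1, he1, hb1, hb1', hP1, hQ1⟩ | ⟨s1, a1, t1, he1, ha1, hb1, hP1, hQ1⟩ |
      ⟨s1, a1, t1, he1, ha1, hb1, hP1, hQ1⟩ <;>
    rcases q2 with ⟨s2, t2, he2, hb2, hb2', hP2, hQ2⟩ | ⟨s2, a2, t2, he2, ha2, hb2, hP2, hQ2⟩ |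
      ⟨s2, a2, t2, he2, ha2, hb2, hP2, hQ2⟩
  · have ht : t1 = t2 := sig_inj hΓ hvY hv' ((hQ1.symm.trans htt).trans hQ2)
    subst ht
    have : s1 = s2 := hsrc hΓ he1 he2
    subst this
    rw [hP1, hP2]
  · exact absurd hb2 hb1
  · exact absurd hb2 hb1'
  · exact absurd hb1 hb2
  · have ht : t1 = t2 := cinl_inj hΓ ((hQ1.symm.trans htt).trans hQ2)
    subst ht
    rw [hP1, hP2]
  · exact absurd (hb1.symm.trans hb2) (Letter.bar_ne v).symm
  · exact absurd hb1 hb2'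
  · exact absurd (hb2.symm.trans hb1) (Letter.bar_ne v).symm
  · have ht : t1 = t2 := Sum.inr_injective ((hQ1.symm.trans htt).trans hQ2)
    subst ht
    rw [hP1, hP2]

lemma cfun_of_fold {u w : SV V A} (h : Gersten.Fold (whSubst v Y Γ).edges u w) :
    cfun Γ v Y u = cfun Γ v Y w := by
  induction h with
  | refl => rfl
  | symm _ ih => exact ih.symm
  | trans _ _ ih1 ih2 => exact ih1.trans ih2
  | step a h1 h2 _ ih => exact cfun_step hΓ hvY hv' h1 h2 ih

end Class2

omit [DecidableEq V] [DecidableEq A] in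
lemma bool_pos_cases (a : Letter A) : a.2 = true ∨ (Letter.bar a).2 = true := by
  rcases a with ⟨a1, b⟩
  cases b
  · exact Or.inr rfl
  · exact Or.inl rfl

lemma mem_whSubst_of_pathEdges {e : V × Letter A × V} (he : e ∈ Γ.edges)
    (hpos : e.2.1.2 = true) {d : SV V A × Letter A × SV V A}
    (hd : d ∈ pathEdges e (wImage v Y e.2.1)) : d ∈ (whSubst v Y Γ).edges := by
  simp only [whSubst, Finset.mem_biUnion, Finset.mem_filter]
  exact ⟨e, ⟨he, hpos⟩, hd⟩

lemma endpoint_mem {p q : SV V A} {b : Letter A} (h : (p, b, q) ∈ (whSubst v Y Γ).edges) :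
    p ∈ (whSubst v Y Γ).verts ∧ q ∈ (whSubst v Y Γ).verts := by
  constructor <;>
  · simp only [whSubst, Finset.mem_union, Finset.mem_biUnion, Finset.mem_insert,
      Finset.mem_singleton]
    right
    exact ⟨(p, b, q), by simpa [whSubst] using h, by simp⟩

lemma inl_mem_verts {x : V} (hx : x ∈ Γ.verts) :
    (Sum.inl x : SV V A) ∈ (whSubst v Y Γ).verts := by
  simp only [whSubst, Finset.mem_union, Finset.mem_image]
  exact Or.inl ⟨x, hx, rfl⟩

section Class3

variable (hΓ : Γ.IsCyclRed) (hvY : v ∈ Y) (hv' : Letter.bar v ∉ Y)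
include hΓ hvY hv'

lemma verts_cases {u : SV V A} (hu : u ∈ (whSubst v Y Γ).verts) :
    (∃ z, z ∈ Γ.verts ∧ u = Sum.inl z) ∨
    (∃ z a x, (z, a, x) ∈ Γ.edges ∧ a.2 = true ∧ a ≠ v ∧ a ≠ Letter.bar v ∧
      ((Letter.bar a ∈ Y ∧ u = Sum.inr ((z, a, x), (0 : Fin 2))) ∨
       (a ∈ Y ∧ Letter.bar a ∈ Y ∧ u = Sum.inr ((z, a, x), (1 : Fin 2))) ∨
       (a ∈ Y ∧ Letter.bar a ∉ Y ∧ u = Sum.inr ((z, a, x), (0 : Fin 2))))) := by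
  simp only [whSubst, Finset.mem_union, Finset.mem_image, Finset.mem_biUnion,
    Finset.mem_insert, Finset.mem_singleton, Finset.mem_filter] at hu
  rcases hu with ⟨x0, hx0, rfl⟩ | ⟨d, ⟨e, ⟨he, hpos⟩, hdm⟩, hu⟩
  · exact Or.inl ⟨x0, hx0, rfl⟩
  obtain ⟨z, a, x⟩ := e
  have hz : z ∈ Γ.verts := (hends hΓ (z, a, x) he).1
  have hx : x ∈ Γ.verts := (hends hΓ (z, a, x) he).2
  by_cases hva : a = v ∨ a = Letter.bar v
  · have hw : wImage v Y a = [a] := by simp [wImage, hva]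
    rw [hw] at hdm
    simp only [pathEdges, Finset.mem_insert, Finset.mem_singleton] at hdm
    rcases hdm with rfl | rfl <;> rcases hu with rfl | rfl <;>
      first
        | exact Or.inl ⟨z, hz, rfl⟩
        | exact Or.inl ⟨x, hx, rfl⟩
  · push_neg at hva
    obtain ⟨hav, hav'⟩ := hva
    have hwimg : wImage v Y a =
        (if Letter.bar a ∈ Y then [Letter.bar v] else []) ++ [a] ++
          (if a ∈ Y then [v] else []) := by
      simp [wImage, hav, hav']
    by_cases h1 : Letter.bar a ∈ Y <;> by_cases h2 : a ∈ Y <;>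
      rw [hwimg] at hdm <;> simp only [h1, h2, if_true, if_false] at hdm <;>
      simp only [List.append_assoc, List.cons_append, List.nil_append, List.append_nil,
        pathEdges, Finset.mem_insert, Finset.mem_singleton] at hdm
    · rcases hdm with rfl | rfl | rfl | rfl | rfl | rfl <;> rcases hu with rfl | rfl <;>
        first
          | exact Or.inl ⟨z, hz, rfl⟩
          | exact Or.inl ⟨x, hx, rfl⟩
          | exact Or.inr ⟨z, a, x, he, hpos, hav, hav', Or.inl ⟨h1, rfl⟩⟩
          | exact Or.inr ⟨z, a, x, he, hpos, hav, hav', Or.inr (Or.inl ⟨h2, h1, rfl⟩)⟩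
    · rcases hdm with rfl | rfl | rfl | rfl <;> rcases hu with rfl | rfl <;>
        first
          | exact Or.inl ⟨z, hz, rfl⟩
          | exact Or.inl ⟨x, hx, rfl⟩
          | exact Or.inr ⟨z, a, x, he, hpos, hav, hav', Or.inl ⟨h1, rfl⟩⟩
    · rcases hdm with rfl | rfl | rfl | rfl <;> rcases hu with rfl | rfl <;>
        first
          | exact Or.inl ⟨z, hz, rfl⟩
          | exact Or.inl ⟨x, hx, rfl⟩
          | exact Or.inr ⟨z, a, x, he, hpos, hav, hav', Or.inr (Or.inr ⟨h2, h1, rfl⟩)⟩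
    · rcases hdm with rfl | rfl <;> rcases hu with rfl | rfl <;>
        first
          | exact Or.inl ⟨z, hz, rfl⟩
          | exact Or.inl ⟨x, hx, rfl⟩

end Class3

section Gen

variable (hΓ : Γ.IsCyclRed) (hvY : v ∈ Y) (hv' : Letter.bar v ∉ Y)
include hΓ hvY hv'

lemma v_edge_of_edge {z x : V} (he : (z, v, x) ∈ Γ.edges) :
    (Sum.inl z, v, Sum.inl x) ∈ (whSubst v Y Γ).edges ∧
      (Sum.inl x, Letter.bar v, Sum.inl z) ∈ (whSubst v Y Γ).edges := by
  rcases bool_pos_cases v with hp | hp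
  · have hw : wImage v Y v = [v] := by simp [wImage]
    constructor <;>
      exact mem_whSubst_of_pathEdges (e := (z, v, x)) he hp (by simp [pathEdges, hw])
  · have he' : (x, Letter.bar v, z) ∈ Γ.edges := (hdual hΓ z v x).1 he
    have hw : wImage v Y (Letter.bar v) = [Letter.bar v] := by simp [wImage]
    constructor <;>
      exact mem_whSubst_of_pathEdges (e := (x, Letter.bar v, z)) he' hp
        (by simp [pathEdges, hw, Letter.bar_bar])

lemma genA {s t : V} {a : Letter A} (he : (s, a, t) ∈ Γ.edges) (hav : a ≠ v)
    (hav' : a ≠ Letter.bar v) :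
    ∃ p q, (p, a, q) ∈ (whSubst v Y Γ).edges ∧
      cfun Γ v Y p = sig Γ v Y s (Letter.bar a) ∧ cfun Γ v Y q = sig Γ v Y t a := by
  have hbav : Letter.bar a ≠ v := fun h' => hav' (by rw [← h', Letter.bar_bar])
  have hbav' : Letter.bar a ≠ Letter.bar v := fun h' => hav (Letter.bar_inj h')
  rcases bool_pos_cases a with hp | hp
  · by_cases h1 : Letter.bar a ∈ Y <;> by_cases h2 : a ∈ Y
    · have hw : wImage v Y a = [Letter.bar v, a, v] := by simp [wImage, hav, hav', h1, h2]
      refine ⟨Sum.inr ((s, a, t), 0), Sum.inr ((s, a, t), 1), ?_, ?_, ?_⟩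
      · exact mem_whSubst_of_pathEdges (e := (s, a, t)) he hp (by simp [pathEdges, hw])
      · simp [cfun_mid, h1, hav, hav', sig]
      · simp [cfun_mid, sig, h2]
    · have hw : wImage v Y a = [Letter.bar v, a] := by simp [wImage, hav, hav', h1, h2]
      refine ⟨Sum.inr ((s, a, t), 0), Sum.inl t, ?_, ?_, ?_⟩
      · exact mem_whSubst_of_pathEdges (e := (s, a, t)) he hp (by simp [pathEdges, hw])
      · simp [cfun_mid, h1, hav, hav', sig]
      · simp [sig, h2]
    · have hw : wImage v Y a = [a, v] := by simp [wImage, hav, hav', h1, h2]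
      refine ⟨Sum.inl s, Sum.inr ((s, a, t), 0), ?_, ?_, ?_⟩
      · exact mem_whSubst_of_pathEdges (e := (s, a, t)) he hp (by simp [pathEdges, hw])
      · simp [sig, h1]
      · simp [cfun_mid, h1, sig, h2]
    · have hw : wImage v Y a = [a] := by simp [wImage, hav, hav', h1, h2]
      refine ⟨Sum.inl s, Sum.inl t, ?_, ?_, ?_⟩
      · exact mem_whSubst_of_pathEdges (e := (s, a, t)) he hp (by simp [pathEdges, hw])
      · simp [sig, h1]
      · simp [sig, h2]
  · have he' : (t, Letter.bar a, s) ∈ Γ.edges := (hdual hΓ s a t).1 he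
    by_cases h1 : Letter.bar a ∈ Y <;> by_cases h2 : a ∈ Y
    · have hw : wImage v Y (Letter.bar a) = [Letter.bar v, Letter.bar a, v] := by
        simp [wImage, hbav, hbav', h1, h2, Letter.bar_bar]
      refine ⟨Sum.inr ((t, Letter.bar a, s), 1), Sum.inr ((t, Letter.bar a, s), 0), ?_, ?_, ?_⟩
      · exact mem_whSubst_of_pathEdges (e := (t, Letter.bar a, s)) he' hp
          (by simp [pathEdges, hw, Letter.bar_bar])
      · simp [cfun_mid, sig, h1]
      · simp [cfun_mid, Letter.bar_bar, h2, hbav, hbav', sig]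
    · have hw : wImage v Y (Letter.bar a) = [Letter.bar a, v] := by
        simp [wImage, hbav, hbav', h1, h2, Letter.bar_bar]
      refine ⟨Sum.inr ((t, Letter.bar a, s), 0), Sum.inl t, ?_, ?_, ?_⟩
      · exact mem_whSubst_of_pathEdges (e := (t, Letter.bar a, s)) he' hp
          (by simp [pathEdges, hw, Letter.bar_bar])
      · simp [cfun_mid, Letter.bar_bar, h2, sig, h1]
      · simp [sig, h2]
    · have hw : wImage v Y (Letter.bar a) = [Letter.bar v, Letter.bar a] := by
        simp [wImage, hbav, hbav', h1, h2, Letter.bar_bar]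
      refine ⟨Sum.inl s, Sum.inr ((t, Letter.bar a, s), 0), ?_, ?_, ?_⟩
      · exact mem_whSubst_of_pathEdges (e := (t, Letter.bar a, s)) he' hp
          (by simp [pathEdges, hw, Letter.bar_bar])
      · simp [sig, h1]
      · simp [cfun_mid, Letter.bar_bar, h2, hbav, hbav', sig]
    · have hw : wImage v Y (Letter.bar a) = [Letter.bar a] := by
        simp [wImage, hbav, hbav', h1, h2, Letter.bar_bar]
      refine ⟨Sum.inl s, Sum.inl t, ?_, ?_, ?_⟩
      · exact mem_whSubst_of_pathEdges (e := (t, Letter.bar a, s)) he' hp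
          (by simp [pathEdges, hw, Letter.bar_bar])
      · simp [sig, h1]
      · simp [sig, h2]

lemma genV {s t : V} {a : Letter A} (he : (s, a, t) ∈ Γ.edges) (ha : a ∈ Y) :
    ∃ p q, (p, v, q) ∈ (whSubst v Y Γ).edges ∧
      (q, Letter.bar v, p) ∈ (whSubst v Y Γ).edges ∧
      cfun Γ v Y p = Sum.inr t ∧ cfun Γ v Y q = cfun Γ v Y (Sum.inl t) := by
  by_cases hav : a = v
  · subst hav
    obtain ⟨h1, h2⟩ := v_edge_of_edge hΓ hvY hv' he
    exact ⟨Sum.inl s, Sum.inl t, h1, h2, cfun_inl_abs hΓ he, rfl⟩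
  have hav' : a ≠ Letter.bar v := fun h' => hv' (h' ▸ ha)
  have hbav : Letter.bar a ≠ v := fun h' => hav' (by rw [← h', Letter.bar_bar])
  have hbav' : Letter.bar a ≠ Letter.bar v := fun h' => hav (Letter.bar_inj h')
  rcases bool_pos_cases a with hp | hp
  · by_cases h1 : Letter.bar a ∈ Y
    · have hw : wImage v Y a = [Letter.bar v, a, v] := by simp [wImage, hav, hav', h1, ha]
      refine ⟨Sum.inr ((s, a, t), 1), Sum.inl t, ?_, ?_, ?_, rfl⟩
      · exact mem_whSubst_of_pathEdges (e := (s, a, t)) he hp (by simp [pathEdges, hw])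
      · exact mem_whSubst_of_pathEdges (e := (s, a, t)) he hp (by simp [pathEdges, hw])
      · simp [cfun_mid]
    · have hw : wImage v Y a = [a, v] := by simp [wImage, hav, hav', h1, ha]
      refine ⟨Sum.inr ((s, a, t), 0), Sum.inl t, ?_, ?_, ?_, rfl⟩
      · exact mem_whSubst_of_pathEdges (e := (s, a, t)) he hp (by simp [pathEdges, hw])
      · exact mem_whSubst_of_pathEdges (e := (s, a, t)) he hp (by simp [pathEdges, hw])
      · simp [cfun_mid, h1]
  · have he' : (t, Letter.bar a, s) ∈ Γ.edges := (hdual hΓ s a t).1 he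
    by_cases h1 : Letter.bar a ∈ Y
    · have hw : wImage v Y (Letter.bar a) = [Letter.bar v, Letter.bar a, v] := by
        simp [wImage, hbav, hbav', h1, ha, Letter.bar_bar]
      refine ⟨Sum.inr ((t, Letter.bar a, s), 0), Sum.inl t, ?_, ?_, ?_, rfl⟩
      · exact mem_whSubst_of_pathEdges (e := (t, Letter.bar a, s)) he' hp
          (by simp [pathEdges, hw, Letter.bar_bar])
      · exact mem_whSubst_of_pathEdges (e := (t, Letter.bar a, s)) he' hp
          (by simp [pathEdges, hw, Letter.bar_bar])
      · simp [cfun_mid, Letter.bar_bar, ha, hbav, hbav']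
    · have hw : wImage v Y (Letter.bar a) = [Letter.bar v, Letter.bar a] := by
        simp [wImage, hbav, hbav', h1, ha, Letter.bar_bar]
      refine ⟨Sum.inr ((t, Letter.bar a, s), 0), Sum.inl t, ?_, ?_, ?_, rfl⟩
      · exact mem_whSubst_of_pathEdges (e := (t, Letter.bar a, s)) he' hp
          (by simp [pathEdges, hw, Letter.bar_bar])
      · exact mem_whSubst_of_pathEdges (e := (t, Letter.bar a, s)) he' hp
          (by simp [pathEdges, hw, Letter.bar_bar])
      · simp [cfun_mid, Letter.bar_bar, ha, hbav, hbav']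

end Gen

section Cls4

variable (hΓ : Γ.IsCyclRed) (hvY : v ∈ Y) (hv' : Letter.bar v ∉ Y)
include hΓ hvY hv'

omit hΓ hvY hv' in
lemma cfun_inr_always (e : V × Letter A × V) (k : Fin 2) :
    ∃ y, cfun Γ v Y (Sum.inr (e, k)) = Sum.inr y := by
  rw [cfun_mid]
  split_ifs
  · exact ⟨e.1, rfl⟩
  · exact ⟨e.2.2, rfl⟩

lemma cfun_eq_inr_v_edge {u : SV V A} {x : V} (hu : u ∈ (whSubst v Y Γ).verts)
    (hc : cfun Γ v Y u = Sum.inr x) : (u, v, Sum.inl x) ∈ (whSubst v Y Γ).edges := by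
  rcases verts_cases hΓ hvY hv' hu with ⟨z, hz, rfl⟩ |
    ⟨z, a, x0, he, hpos, hav, hav', hb⟩
  · rcases cfun_inl_cases (Γ := Γ) (v := v) (Y := Y) hΓ z with h' | ⟨x', he', h'⟩
    · rw [h'] at hc; exact nomatch hc
    · rw [h'] at hc
      have : x' = x := Sum.inr_injective hc
      subst this
      exact (v_edge_of_edge hΓ hvY hv' he').1
  · have hbav : Letter.bar a ≠ v := fun h' => hav' (by rw [← h', Letter.bar_bar])
    have hbav' : Letter.bar a ≠ Letter.bar v := fun h' => hav (Letter.bar_inj h')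
    rcases hb with ⟨h1, rfl⟩ | ⟨h2, h1, rfl⟩ | ⟨h2, h1, rfl⟩
    · have hcm : cfun Γ v Y (Sum.inr ((z, a, x0), (0 : Fin 2))) = Sum.inr z := by
        simp [cfun_mid, h1, hav, hav']
      have : z = x := Sum.inr_injective (hcm.symm.trans hc)
      subst this
      by_cases h2 : a ∈ Y
      · have hw : wImage v Y a = [Letter.bar v, a, v] := by simp [wImage, hav, hav', h1, h2]
        exact mem_whSubst_of_pathEdges (e := (z, a, x0)) he hpos
          (by simp [pathEdges, hw, Letter.bar_bar])
      · have hw : wImage v Y a = [Letter.bar v, a] := by simp [wImage, hav, hav', h1, h2]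
        exact mem_whSubst_of_pathEdges (e := (z, a, x0)) he hpos
          (by simp [pathEdges, hw, Letter.bar_bar])
    · have hcm : cfun Γ v Y (Sum.inr ((z, a, x0), (1 : Fin 2))) = Sum.inr x0 := by
        simp [cfun_mid]
      have : x0 = x := Sum.inr_injective (hcm.symm.trans hc)
      subst this
      have hw : wImage v Y a = [Letter.bar v, a, v] := by simp [wImage, hav, hav', h1, h2]
      exact mem_whSubst_of_pathEdges (e := (z, a, x0)) he hpos
        (by simp [pathEdges, hw])
    · have hcm : cfun Γ v Y (Sum.inr ((z, a, x0), (0 : Fin 2))) = Sum.inr x0 := by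
        simp [cfun_mid, h1]
      have : x0 = x := Sum.inr_injective (hcm.symm.trans hc)
      subst this
      have hw : wImage v Y a = [a, v] := by simp [wImage, hav, hav', h1, h2]
      exact mem_whSubst_of_pathEdges (e := (z, a, x0)) he hpos
        (by simp [pathEdges, hw])

lemma vclass {u : SV V A} (hu : u ∈ (whSubst v Y Γ).verts) :
    (∃ x, x ∈ Γ.verts ∧ ¬ Absorbed Γ v x ∧ cfun Γ v Y u = Sum.inl x) ∨
    (∃ x, x ∈ Γ.verts ∧ (∃ a ∈ Γ.hl x, a ∈ Y) ∧ cfun Γ v Y u = Sum.inr x) := by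
  rcases verts_cases hΓ hvY hv' hu with ⟨z, hz, rfl⟩ |
    ⟨z, a, x0, he, hpos, hav, hav', hb⟩
  · by_cases habs : Absorbed Γ v z
    · obtain ⟨x0, he⟩ := habs
      exact Or.inr ⟨x0, (hends hΓ _ he).2, ⟨v, hl_mem_iff.mpr ⟨z, he⟩, hvY⟩,
        cfun_inl_abs hΓ he⟩
    · exact Or.inl ⟨z, hz, habs, cfun_inl_nabs habs⟩
  · have hd : (x0, Letter.bar a, z) ∈ Γ.edges := (hdual hΓ z a x0).1 he
    rcases hb with ⟨h1, rfl⟩ | ⟨h2, h1, rfl⟩ | ⟨h2, h1, rfl⟩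
    · exact Or.inr ⟨z, (hends hΓ _ he).1, ⟨Letter.bar a, hl_mem_iff.mpr ⟨x0, hd⟩, h1⟩,
        by simp [cfun_mid, h1, hav, hav']⟩
    · exact Or.inr ⟨x0, (hends hΓ _ he).2, ⟨a, hl_mem_iff.mpr ⟨z, he⟩, h2⟩,
        by simp [cfun_mid]⟩
    · exact Or.inr ⟨x0, (hends hΓ _ he).2, ⟨a, hl_mem_iff.mpr ⟨z, he⟩, h2⟩,
        by simp [cfun_mid, h1]⟩

lemma vexists_inr {x : V} {a : Letter A} (ha : a ∈ Γ.hl x) (haY : a ∈ Y) :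
    ∃ u ∈ (whSubst v Y Γ).verts, cfun Γ v Y u = Sum.inr x := by
  obtain ⟨s, he⟩ := hl_mem_iff.mp ha
  obtain ⟨p, q, hpv, _, hcp, _⟩ := genV hΓ hvY hv' he haY
  exact ⟨p, (endpoint_mem hpv).1, hcp⟩

lemma mem_verts_cfun_inl {u : SV V A} {x : V} (hc : cfun Γ v Y u = Sum.inl x) :
    u = Sum.inl x := by
  match u with
  | Sum.inl z => exact congrArg Sum.inl (cfun_inl_eq_inl hΓ hc)
  | Sum.inr (e, k) =>
      obtain ⟨y, hy⟩ := cfun_inr_always (Γ := Γ) (v := v) (Y := Y) e k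
      rw [hy] at hc
      exact nomatch hc

end Cls4

variable (Γ v) in
open scoped Classical in
noncomputable def nabs : Finset V := Γ.verts.filter (fun x => ¬ Absorbed Γ v x)

variable (Γ Y) in
open scoped Classical in
noncomputable def meetY : Finset V := Γ.verts.filter (fun x => ∃ a ∈ Γ.hl x, a ∈ Y)

variable (Γ Y) in
open scoped Classical in
noncomputable def trimset : Finset V :=
  Γ.verts.filter (fun x => (Γ.hl x ∩ Y).Nonempty ∧ Γ.hl x ⊆ Y)

section Count

variable (hΓ : Γ.IsCyclRed) (hvY : v ∈ Y) (hv' : Letter.bar v ∉ Y)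
include hΓ hvY hv'

lemma image_cfun_verts :
    (whSubst v Y Γ).verts.image (cfun Γ v Y) =
      (nabs Γ v).image Sum.inl ∪ (meetY Γ Y).image Sum.inr := by
  ext u
  simp only [Finset.mem_union, Finset.mem_image, nabs, meetY, Finset.mem_filter]
  constructor
  · rintro ⟨w, hw, rfl⟩
    rcases vclass hΓ hvY hv' hw with ⟨x, hx, hnab, hc⟩ | ⟨x, hx, hm, hc⟩
    · exact Or.inl ⟨x, ⟨hx, hnab⟩, hc.symm⟩
    · exact Or.inr ⟨x, ⟨hx, hm⟩, hc.symm⟩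
  · rintro (⟨x, ⟨hx, hnab⟩, rfl⟩ | ⟨x, ⟨hx, ⟨a, hahl, haY⟩⟩, rfl⟩)
    · exact ⟨Sum.inl x, inl_mem_verts hx, cfun_inl_nabs hnab⟩
    · obtain ⟨w, hw, hc⟩ := vexists_inr hΓ hvY hv' hahl haY
      exact ⟨w, hw, hc⟩

lemma card_image_cfun :
    ((whSubst v Y Γ).verts.image (cfun Γ v Y)).card = (nabs Γ v).card + (meetY Γ Y).card := by
  rw [image_cfun_verts hΓ hvY hv']
  rw [Finset.card_union_of_disjoint]
  · rw [Finset.card_image_of_injective _ Sum.inl_injective,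
      Finset.card_image_of_injective _ Sum.inr_injective]
  · rw [Finset.disjoint_left]
    rintro u hu1 hu2
    simp only [Finset.mem_image] at hu1 hu2
    obtain ⟨x, _, rfl⟩ := hu1
    obtain ⟨y, _, h⟩ := hu2
    exact absurd h (by simp)

omit hvY hv' in
open scoped Classical in
lemma abs_card :
    (Γ.verts.filter (fun z => Absorbed Γ v z)).card = AGraph.deg Γ v := by
  classical
  unfold AGraph.deg
  refine Finset.card_bij (fun z hz => ((Finset.mem_filter.mp hz).2).choose) ?_ ?_ ?_
  · intro z hz
    have hspec := ((Finset.mem_filter.mp hz).2).choose_spec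
    exact Finset.mem_filter.mpr ⟨(hends hΓ _ hspec).2, hl_mem_iff.mpr ⟨z, hspec⟩⟩
  · intro z1 hz1 z2 hz2 heq
    have h1 := ((Finset.mem_filter.mp hz1).2).choose_spec
    have h2 := ((Finset.mem_filter.mp hz2).2).choose_spec
    rw [heq] at h1
    exact hsrc hΓ h1 h2
  · intro x hx
    obtain ⟨hxv, hxl⟩ := Finset.mem_filter.mp hx
    obtain ⟨z, he⟩ := hl_mem_iff.mp hxl
    have habs : Absorbed Γ v z := ⟨x, he⟩
    have hzmem : z ∈ Γ.verts.filter (fun z => Absorbed Γ v z) :=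
      Finset.mem_filter.mpr ⟨(hends hΓ _ he).1, habs⟩
    exact ⟨z, hzmem, htgt hΓ ((Finset.mem_filter.mp hzmem).2).choose_spec he⟩

omit hvY hv' in
open scoped Classical in
lemma nabs_card : (nabs Γ v).card + AGraph.deg Γ v = Γ.verts.card := by
  classical
  rw [← abs_card hΓ]
  rw [add_comm]
  rw [← Finset.card_filter_add_card_filter_not
    (s := Γ.verts) (p := fun z => Absorbed Γ v z)]
  simp [nabs]

omit hΓ hvY hv' in
lemma meetY_card : (meetY Γ Y).card = AGraph.cap Γ Y + (trimset Γ Y).card := by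
  classical
  have hsplit : meetY Γ Y =
      (Γ.verts.filter (fun x => (Γ.hl x ∩ Y).Nonempty ∧ (Γ.hl x \ Y).Nonempty)) ∪
        trimset Γ Y := by
    ext x
    simp only [meetY, trimset, Finset.mem_union, Finset.mem_filter]
    constructor
    · rintro ⟨hx, a, hahl, haY⟩
      have hne : (Γ.hl x ∩ Y).Nonempty := ⟨a, Finset.mem_inter.mpr ⟨hahl, haY⟩⟩
      by_cases hsub : Γ.hl x ⊆ Y
      · exact Or.inr ⟨hx, hne, hsub⟩
      · refine Or.inl ⟨hx, hne, ?_⟩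
        rw [Finset.sdiff_nonempty]
        exact hsub
    · rintro (⟨hx, ⟨a, ha⟩, _⟩ | ⟨hx, ⟨a, ha⟩, _⟩) <;>
        exact ⟨hx, a, (Finset.mem_inter.mp ha).1, (Finset.mem_inter.mp ha).2⟩
  rw [hsplit, Finset.card_union_of_disjoint]
  · congr 1
  · rw [Finset.disjoint_left]
    rintro x hx1 hx2
    simp only [trimset, Finset.mem_filter] at hx1 hx2
    obtain ⟨a, ha⟩ := hx1.2.2
    exact absurd (hx2.2.2 (Finset.mem_sdiff.mp ha).1) (Finset.mem_sdiff.mp ha).2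

end Count

section RemoveSet

variable {W : Type} [DecidableEq W]

/-- Remove a set of vertices and all adjacent edges. -/
def removeSet (G : AGraph W A) (T : Finset W) : AGraph W A :=
  ⟨G.verts \ T, G.edges.filter (fun e => e.1 ∉ T ∧ e.2.2 ∉ T)⟩

lemma removeSet_empty (G : AGraph W A) : removeSet G ∅ = G := by
  unfold removeSet
  cases G with
  | mk verts edges => simp

lemma removeV_removeSet (G : AGraph W A) (T : Finset W) (y : W) :
    (removeSet G T).removeV y = removeSet G (insert y T) := by
  unfold removeSet AGraph.removeV
  congr 1
  · ext w
    simp only [Finset.mem_erase, Finset.mem_sdiff, Finset.mem_insert]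
    tauto
  · ext e
    simp only [Finset.mem_filter, Finset.mem_insert]
    tauto

lemma core_card {G Δ : AGraph W A} (S : Finset W) (hS : S ⊆ G.verts)
    (hend : ∀ T ⊆ S, ∀ w, (removeSet G T).IsEndpoint w ↔ w ∈ S \ T)
    (hcore : AGraph.CoreOf G Δ) : Δ.verts.card + S.card = G.verts.card := by
  obtain ⟨htrim, hnoend⟩ := hcore
  suffices h : ∀ T ⊆ S, ∀ (G' : AGraph W A), G' = removeSet G T →
      Relation.ReflTransGen AGraph.ElemTrim G' Δ → Δ = removeSet G S by
    rw [h ∅ (Finset.empty_subset S) G (removeSet_empty G).symm htrim]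
    show ((G.verts \ S).card) + S.card = _
    exact Finset.card_sdiff_add_card_eq_card hS
  suffices h : ∀ (G' : AGraph W A), Relation.ReflTransGen AGraph.ElemTrim G' Δ →
      ∀ T ⊆ S, G' = removeSet G T → Δ = removeSet G S by
    intro T hT G' hG' hch
    exact h G' hch T hT hG'
  intro G' h
  induction h using Relation.ReflTransGen.head_induction_on with
  | refl =>
      intro T hT hΔ
      have hST : S \ T = ∅ := by
        by_contra hne
        obtain ⟨w, hw⟩ := Finset.nonempty_of_ne_empty hne
        exact hnoend w (hΔ ▸ (hend T hT w).2 hw)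
      have : T = S := Finset.Subset.antisymm hT
        (by rwa [← Finset.sdiff_eq_empty_iff_subset])
      rw [hΔ, this]
  | head hstep hchain ih =>
      intro T hT hG'
      subst hG'
      obtain ⟨y, hy, hb⟩ := hstep
      have hyS : y ∈ S \ T := (hend T hT y).1 hy
      refine ih (insert y T) (Finset.insert_subset (Finset.mem_sdiff.mp hyS).1 hT) ?_
      rw [hb, removeV_removeSet]

end RemoveSet

lemma trimset_sub : trimset Γ Y ⊆ Γ.verts := Finset.filter_subset _ _

lemma trimset_hl_sub {x : V} (hx : x ∈ trimset Γ Y) : Γ.hl x ⊆ Y := by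
  classical
  exact (Finset.mem_filter.mp hx).2.2

section TrimFacts

variable (hΓ : Γ.IsCyclRed) (hvY : v ∈ Y) (hv' : Letter.bar v ∉ Y)
include hΓ hvY hv'

lemma trimset_nabs {x : V} (hx : x ∈ trimset Γ Y) : ¬ Absorbed Γ v x := by
  rintro ⟨x0, he⟩
  have hd : (x0, Letter.bar v, x) ∈ Γ.edges := (hdual hΓ x v x0).1 he
  exact hv' (trimset_hl_sub hx (hl_mem_iff.mpr ⟨x0, hd⟩))

lemma hl_two_elems {x : V} (hx : x ∈ Γ.verts) :
    ∃ b1 ∈ Γ.hl x, ∃ b2 ∈ Γ.hl x, b1 ≠ b2 :=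
  Finset.one_lt_card.mp (lt_of_lt_of_le one_lt_two (hl_card_ge hΓ hx))

lemma hl_other {x : V} (hx : x ∈ Γ.verts) (b0 : Letter A) :
    ∃ b ∈ Γ.hl x, b ≠ b0 := by
  obtain ⟨b1, h1, b2, h2, hne⟩ := hl_two_elems hΓ hvY hv' hx
  by_cases h : b1 = b0
  · exact ⟨b2, h2, fun hh => hne (h.trans hh.symm)⟩
  · exact ⟨b1, h1, h⟩

end TrimFacts

section Trim

variable (hΓ : Γ.IsCyclRed) (hvY : v ∈ Y) (hv' : Letter.bar v ∉ Y)
variable {F : SV V A → SV V A} {Δ' : AGraph (SV V A) A}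
variable (hE : Δ'.edges = (whSubst v Y Γ).edges.image (fun e => (F e.1, e.2.1, F e.2.2)))
variable (hkey : ∀ u ∈ (whSubst v Y Γ).verts, ∀ w ∈ (whSubst v Y Γ).verts,
    (F u = F w ↔ cfun Γ v Y u = cfun Γ v Y w))
variable {T₀ : Finset V} (hT₀ : T₀ ⊆ trimset Γ Y)
include hΓ hvY hv' hE hkey hT₀

omit hE in
lemma FinT_iff {p : SV V A} (hp : p ∈ (whSubst v Y Γ).verts) :
    F p ∈ T₀.image (fun x => F (Sum.inl x)) ↔ ∃ x ∈ T₀, cfun Γ v Y p = Sum.inl x := by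
  simp only [Finset.mem_image]
  constructor
  · rintro ⟨x, hx, hFx⟩
    have hxv : x ∈ Γ.verts := trimset_sub (hT₀ hx)
    have := (hkey p hp (Sum.inl x) (inl_mem_verts hxv)).1 hFx.symm
    rw [cfun_inl_nabs (trimset_nabs hΓ hvY hv' (hT₀ hx))] at this
    exact ⟨x, hx, this⟩
  · rintro ⟨x, hx, hcx⟩
    have hxv : x ∈ Γ.verts := trimset_sub (hT₀ hx)
    refine ⟨x, hx, ((hkey p hp (Sum.inl x) (inl_mem_verts hxv)).2 ?_).symm⟩
    rw [cfun_inl_nabs (trimset_nabs hΓ hvY hv' (hT₀ hx))]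
    exact hcx

lemma hlT_mem_iff {u : SV V A} (hu : u ∈ (whSubst v Y Γ).verts) {b : Letter A} :
    b ∈ (removeSet Δ' (T₀.image (fun x => F (Sum.inl x)))).hl (F u) ↔
      ∃ p q, (p, b, q) ∈ (whSubst v Y Γ).edges ∧ cfun Γ v Y q = cfun Γ v Y u ∧
        (∀ x ∈ T₀, cfun Γ v Y p ≠ Sum.inl x) ∧ (∀ x ∈ T₀, cfun Γ v Y q ≠ Sum.inl x) := by
  unfold removeSet AGraph.hl AGraph.link
  simp only [Finset.mem_image, Finset.mem_filter, hE]
  constructor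
  · rintro ⟨e', ⟨⟨⟨d, hd, rfl⟩, hfT⟩, htgt'⟩, hlab⟩
    obtain ⟨p, b', q⟩ := d
    simp only at hfT htgt' hlab
    subst hlab
    have hp := (endpoint_mem hd).1
    have hq := (endpoint_mem hd).2
    refine ⟨p, q, hd, (hkey q hq u hu).1 htgt', ?_, ?_⟩
    · intro x hx hc
      apply hfT.1
      refine ⟨x, hx, (hkey (Sum.inl x) (inl_mem_verts (trimset_sub (hT₀ hx))) p hp).2 ?_⟩
      rw [cfun_inl_nabs (trimset_nabs hΓ hvY hv' (hT₀ hx)), hc]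
    · intro x hx hc
      apply hfT.2
      refine ⟨x, hx, (hkey (Sum.inl x) (inl_mem_verts (trimset_sub (hT₀ hx))) q hq).2 ?_⟩
      rw [cfun_inl_nabs (trimset_nabs hΓ hvY hv' (hT₀ hx)), hc]
  · rintro ⟨p, q, hd, hcq, hpT, hqT⟩
    have hp := (endpoint_mem hd).1
    have hq := (endpoint_mem hd).2
    refine ⟨(F p, b, F q), ⟨⟨⟨(p, b, q), hd, rfl⟩, ?_, ?_⟩, ?_⟩, rfl⟩
    · rintro ⟨x, hx, hFx⟩
      simp only at hFx
      apply hpT x hx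
      have h2 := (hkey (Sum.inl x) (inl_mem_verts (trimset_sub (hT₀ hx))) p hp).1 hFx
      rw [cfun_inl_nabs (trimset_nabs hΓ hvY hv' (hT₀ hx))] at h2
      exact h2.symm
    · rintro ⟨x, hx, hFx⟩
      simp only at hFx
      apply hqT x hx
      have h2 := (hkey (Sum.inl x) (inl_mem_verts (trimset_sub (hT₀ hx))) q hq).1 hFx
      rw [cfun_inl_nabs (trimset_nabs hΓ hvY hv' (hT₀ hx))] at h2
      exact h2.symm
    · exact (hkey q hq u hu).2 hcq

-- upper bound on the hyperlink of an `inl`-class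
lemma hlT_inl_sub {x : V} (hnab : ¬ Absorbed Γ v x) {b : Letter A}
    (hb : b ∈ (removeSet Δ' (T₀.image (fun x => F (Sum.inl x)))).hl (F (Sum.inl x)))
    (hx : x ∈ Γ.verts) :
    (b ∈ Γ.hl x ∧ b ∉ Y) ∨ (b = v ∧ ∃ a ∈ Γ.hl x, a ∈ Y) := by
  rw [hlT_mem_iff hΓ hvY hv' hE hkey hT₀ (inl_mem_verts hx)] at hb
  obtain ⟨p, q, hd, hcq, hpT, hqT⟩ := hb
  rw [cfun_inl_nabs hnab] at hcq
  rcases qe_of_mem hΓ hvY hv' hd with ⟨s, t, he, hb1, hb2, hP, hQ⟩ |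
      ⟨s, a, t, he, ha, rfl, hP, hQ⟩ | ⟨s, a, t, he, ha, rfl, hP, hQ⟩
  · rw [hQ] at hcq
    unfold sig at hcq
    split_ifs at hcq with hbY
    have : t = x := cfun_inl_eq_inl hΓ hcq
    subst this
    exact Or.inl ⟨hl_mem_iff.mpr ⟨s, he⟩, hbY⟩
  · rw [hQ] at hcq
    have : t = x := cfun_inl_eq_inl hΓ hcq
    subst this
    exact Or.inr ⟨rfl, a, hl_mem_iff.mpr ⟨s, he⟩, ha⟩
  · rw [hQ] at hcq
    exact nomatch hcq

-- lower bounds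
lemma hlT_inl_v_mem {x : V} (hx : x ∈ Γ.verts) (hnab : ¬ Absorbed Γ v x)
    (hxT : x ∉ T₀) {a : Letter A} (ha : a ∈ Γ.hl x) (haY : a ∈ Y) :
    v ∈ (removeSet Δ' (T₀.image (fun x => F (Sum.inl x)))).hl (F (Sum.inl x)) := by
  rw [hlT_mem_iff hΓ hvY hv' hE hkey hT₀ (inl_mem_verts hx)]
  obtain ⟨s, he⟩ := hl_mem_iff.mp ha
  obtain ⟨p, q, hpv, _, hcp, hcq⟩ := genV hΓ hvY hv' he haY
  refine ⟨p, q, hpv, hcq, ?_, ?_⟩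
  · intro x' _ hc
    rw [hcp] at hc
    exact nomatch hc
  · intro x' hx' hc
    rw [hcq, cfun_inl_nabs hnab] at hc
    have : x = x' := Sum.inl_injective hc
    exact hxT (this ▸ hx')

lemma hlT_inl_mem_of_hl {x : V} (hx : x ∈ Γ.verts) (hnab : ¬ Absorbed Γ v x)
    (hxT : x ∉ T₀) {b : Letter A} (hb : b ∈ Γ.hl x) (hbY : b ∉ Y) :
    b ∈ (removeSet Δ' (T₀.image (fun x => F (Sum.inl x)))).hl (F (Sum.inl x)) := by
  rw [hlT_mem_iff hΓ hvY hv' hE hkey hT₀ (inl_mem_verts hx)]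
  obtain ⟨s, he⟩ := hl_mem_iff.mp hb
  have hbv : b ≠ v := fun h => hbY (h ▸ hvY)
  have hbv' : b ≠ Letter.bar v := by
    intro h
    subst h
    have hdd := (hdual hΓ s (Letter.bar v) x).1 he
    rw [Letter.bar_bar] at hdd
    exact hnab ⟨s, hdd⟩
  obtain ⟨p, q, hpe, hcp, hcq⟩ := genA hΓ hvY hv' he hbv hbv'
  have hbarhl : Letter.bar b ∈ Γ.hl s := hl_mem_iff.mpr ⟨x, (hdual hΓ s b x).1 he⟩
  refine ⟨p, q, hpe, ?_, ?_, ?_⟩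
  · rw [hcq]
    unfold sig
    rw [if_neg hbY]
  · intro x' hx' hc
    rw [hcp] at hc
    unfold sig at hc
    split_ifs at hc with hbbY
    have : s = x' := cfun_inl_eq_inl hΓ hc
    subst this
    exact hbbY (trimset_hl_sub (hT₀ hx') hbarhl)
  · intro x' hx' hc
    rw [hcq] at hc
    unfold sig at hc
    rw [if_neg hbY, cfun_inl_nabs hnab] at hc
    have : x = x' := Sum.inl_injective hc
    exact hxT (this ▸ hx')

lemma hlT_inr_barv_mem {x : V} {u : SV V A} (hu : u ∈ (whSubst v Y Γ).verts)
    (hcu : cfun Γ v Y u = Sum.inr x) (hxT : x ∉ T₀) {a : Letter A}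
    (ha : a ∈ Γ.hl x) (haY : a ∈ Y) :
    Letter.bar v ∈ (removeSet Δ' (T₀.image (fun x => F (Sum.inl x)))).hl (F u) := by
  rw [hlT_mem_iff hΓ hvY hv' hE hkey hT₀ hu]
  obtain ⟨s, he⟩ := hl_mem_iff.mp ha
  obtain ⟨p, q, _, hqv, hcp, hcq⟩ := genV hΓ hvY hv' he haY
  refine ⟨q, p, hqv, hcp.trans hcu.symm, ?_, ?_⟩
  · intro x' hx' hc
    rw [hcq] at hc
    have : x = x' := cfun_inl_eq_inl hΓ hc
    exact hxT (this ▸ hx')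
  · intro x' _ hc
    rw [hcp] at hc
    exact nomatch hc

lemma hlT_inr_a_mem {x : V} {u : SV V A} (hu : u ∈ (whSubst v Y Γ).verts)
    (hcu : cfun Γ v Y u = Sum.inr x) {a : Letter A}
    (ha : a ∈ Γ.hl x) (haY : a ∈ Y) (hav : a ≠ v) :
    a ∈ (removeSet Δ' (T₀.image (fun x => F (Sum.inl x)))).hl (F u) := by
  rw [hlT_mem_iff hΓ hvY hv' hE hkey hT₀ hu]
  obtain ⟨s, he⟩ := hl_mem_iff.mp ha
  have hav' : a ≠ Letter.bar v := fun h => hv' (h ▸ haY)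
  obtain ⟨p, q, hpe, hcp, hcq⟩ := genA hΓ hvY hv' he hav hav'
  have hbarhl : Letter.bar a ∈ Γ.hl s := hl_mem_iff.mpr ⟨x, (hdual hΓ s a x).1 he⟩
  refine ⟨p, q, hpe, ?_, ?_, ?_⟩
  · rw [hcq]
    unfold sig
    rw [if_pos haY, hcu]
  · intro x' hx' hc
    rw [hcp] at hc
    unfold sig at hc
    split_ifs at hc with hbbY
    have : s = x' := cfun_inl_eq_inl hΓ hc
    subst this
    exact hbbY (trimset_hl_sub (hT₀ hx') hbarhl)
  · intro x' _ hc
    rw [hcq] at hc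
    unfold sig at hc
    rw [if_pos haY] at hc
    exact nomatch hc

lemma hlT_inr_z_mem {x z : V} {u : SV V A} (hu : u ∈ (whSubst v Y Γ).verts)
    (hcu : cfun Γ v Y u = Sum.inr x) (hzv : (z, v, x) ∈ Γ.edges) {b : Letter A}
    (hb : b ∈ Γ.hl z) (hbv : b ≠ Letter.bar v) :
    (b ∈ Y → v ∈ (removeSet Δ' (T₀.image (fun x => F (Sum.inl x)))).hl (F u)) ∧
    (b ∉ Y → b ∈ (removeSet Δ' (T₀.image (fun x => F (Sum.inl x)))).hl (F u)) := by
  have hcz : cfun Γ v Y (Sum.inl z) = Sum.inr x := cfun_inl_abs hΓ hzv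
  obtain ⟨s, he⟩ := hl_mem_iff.mp hb
  constructor
  · intro hbY
    rw [hlT_mem_iff hΓ hvY hv' hE hkey hT₀ hu]
    obtain ⟨p, q, hpv, _, hcp, hcq⟩ := genV hΓ hvY hv' he hbY
    refine ⟨p, q, hpv, ?_, ?_, ?_⟩
    · rw [hcq, hcz, hcu]
    · intro x' _ hc
      rw [hcp] at hc
      exact nomatch hc
    · intro x' _ hc
      rw [hcq, hcz] at hc
      exact nomatch hc
  · intro hbY
    rw [hlT_mem_iff hΓ hvY hv' hE hkey hT₀ hu]
    have hbv2 : b ≠ v := fun h => hbY (h ▸ hvY)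
    obtain ⟨p, q, hpe, hcp, hcq⟩ := genA hΓ hvY hv' he hbv2 hbv
    have hbarhl : Letter.bar b ∈ Γ.hl s := hl_mem_iff.mpr ⟨z, (hdual hΓ s b z).1 he⟩
    refine ⟨p, q, hpe, ?_, ?_, ?_⟩
    · rw [hcq]
      unfold sig
      rw [if_neg hbY, hcz, hcu]
    · intro x' hx' hc
      rw [hcp] at hc
      unfold sig at hc
      split_ifs at hc with hbbY
      have : s = x' := cfun_inl_eq_inl hΓ hc
      subst this
      exact hbbY (trimset_hl_sub (hT₀ hx') hbarhl)
    · intro x' _ hc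
      rw [hcq] at hc
      unfold sig at hc
      rw [if_neg hbY, hcz] at hc
      exact nomatch hc

end Trim

section Endpoint

variable (hΓ : Γ.IsCyclRed) (hvY : v ∈ Y) (hv' : Letter.bar v ∉ Y)
variable {F : SV V A → SV V A} {Δ' : AGraph (SV V A) A}
variable (hE : Δ'.edges = (whSubst v Y Γ).edges.image (fun e => (F e.1, e.2.1, F e.2.2)))
variable (hV : Δ'.verts = (whSubst v Y Γ).verts.image F)
variable (hkey : ∀ u ∈ (whSubst v Y Γ).verts, ∀ w ∈ (whSubst v Y Γ).verts,
    (F u = F w ↔ cfun Γ v Y u = cfun Γ v Y w))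
variable {T₀ : Finset V} (hT₀ : T₀ ⊆ trimset Γ Y)
include hΓ hvY hv' hE hV hkey hT₀

lemma endpoint_iff (w : SV V A) :
    (removeSet Δ' (T₀.image (fun x => F (Sum.inl x)))).IsEndpoint w ↔
      w ∈ ((trimset Γ Y).image (fun x => F (Sum.inl x))) \
        (T₀.image (fun x => F (Sum.inl x))) := by
  classical
  constructor
  · intro hw
    unfold AGraph.IsEndpoint at hw
    obtain ⟨hwv, hwc⟩ := hw
    simp only [removeSet] at hwv
    rw [Finset.mem_sdiff] at hwv
    obtain ⟨hw1, hwT⟩ := hwv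
    rw [hV] at hw1
    obtain ⟨u, hu, rfl⟩ := Finset.mem_image.mp hw1
    rcases vclass hΓ hvY hv' hu with ⟨x, hxv, hnab, hcu⟩ | ⟨x, hxv, ⟨a, hahl, haY⟩, hcu⟩
    · -- `inl`-class
      have hFux : F u = F (Sum.inl x) := (hkey u hu _ (inl_mem_verts hxv)).2
        (by rw [hcu, cfun_inl_nabs hnab])
      have hxT0 : x ∉ T₀ := fun h =>
        hwT (by rw [hFux]; exact Finset.mem_image.mpr ⟨x, h, rfl⟩)
      rw [hFux] at hwc
      by_cases hmeet : ∃ a ∈ Γ.hl x, a ∈ Y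
      · obtain ⟨a, hahl, haY⟩ := hmeet
        have hvmem := hlT_inl_v_mem hΓ hvY hv' hE hkey hT₀ hxv hnab hxT0 hahl haY
        have hsub : Γ.hl x ⊆ Y := by
          by_contra hns
          obtain ⟨b, hb, hbY⟩ := Finset.not_subset.mp hns
          have hbmem := hlT_inl_mem_of_hl hΓ hvY hv' hE hkey hT₀ hxv hnab hxT0 hb hbY
          have hvb : v ≠ b := fun h => hbY (h ▸ hvY)
          have := Finset.one_lt_card.mpr ⟨v, hvmem, b, hbmem, hvb⟩
          omega
        have hxtrim : x ∈ trimset Γ Y := Finset.mem_filter.mpr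
          ⟨hxv, ⟨a, Finset.mem_inter.mpr ⟨hahl, haY⟩⟩, hsub⟩
        rw [Finset.mem_sdiff]
        refine ⟨?_, hwT⟩
        rw [hFux]
        exact Finset.mem_image.mpr ⟨x, hxtrim, rfl⟩
      · push_neg at hmeet
        obtain ⟨b1, hb1, b2, hb2, hne⟩ := hl_two_elems hΓ hvY hv' hxv
        have h1 := hlT_inl_mem_of_hl hΓ hvY hv' hE hkey hT₀ hxv hnab hxT0 hb1 (hmeet b1 hb1)
        have h2 := hlT_inl_mem_of_hl hΓ hvY hv' hE hkey hT₀ hxv hnab hxT0 hb2 (hmeet b2 hb2)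
        have := Finset.one_lt_card.mpr ⟨b1, h1, b2, h2, hne⟩
        omega
    · -- `inr`-class: never an endpoint, contradiction
      exfalso
      by_cases hxT : x ∈ T₀
      · have hxtrim := hT₀ hxT
        have hsub := trimset_hl_sub hxtrim
        obtain ⟨a1, ha1, ha1v⟩ := hl_other hΓ hvY hv' hxv v
        have h1 := hlT_inr_a_mem hΓ hvY hv' hE hkey hT₀ hu hcu ha1 (hsub ha1) ha1v
        by_cases hex : ∃ a2 ∈ Γ.hl x, a2 ≠ v ∧ a2 ≠ a1
        · obtain ⟨a2, ha2, ha2v, ha2ne⟩ := hex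
          have h2 := hlT_inr_a_mem hΓ hvY hv' hE hkey hT₀ hu hcu ha2 (hsub ha2) ha2v
          have := Finset.one_lt_card.mpr ⟨a1, h1, a2, h2, fun h => ha2ne h.symm⟩
          omega
        · push_neg at hex
          have hvhl : v ∈ Γ.hl x := by
            by_contra hvn
            obtain ⟨c1, hc1, c2, hc2, hcne⟩ := hl_two_elems hΓ hvY hv' hxv
            have e1 : c1 = a1 := hex c1 hc1 (fun h => hvn (h ▸ hc1))
            have e2 : c2 = a1 := hex c2 hc2 (fun h => hvn (h ▸ hc2))
            exact hcne (e1.trans e2.symm)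
          obtain ⟨z, hzv⟩ := hl_mem_iff.mp hvhl
          have hzverts : z ∈ Γ.verts := (hends hΓ _ hzv).1
          obtain ⟨b, hbz, hbne⟩ := hl_other hΓ hvY hv' hzverts (Letter.bar v)
          have hD3 := hlT_inr_z_mem hΓ hvY hv' hE hkey hT₀ hu hcu hzv hbz hbne
          by_cases hbY : b ∈ Y
          · have h2 := hD3.1 hbY
            have := Finset.one_lt_card.mpr ⟨a1, h1, v, h2, ha1v⟩
            omega
          · have h2 := hD3.2 hbY
            have hba1 : a1 ≠ b := fun h => hbY (h ▸ hsub ha1)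
            have := Finset.one_lt_card.mpr ⟨a1, h1, b, h2, hba1⟩
            omega
      · have hbv := hlT_inr_barv_mem hΓ hvY hv' hE hkey hT₀ hu hcu hxT hahl haY
        by_cases hex : ∃ a' ∈ Γ.hl x, a' ∈ Y ∧ a' ≠ v
        · obtain ⟨a', ha', haY', hav'⟩ := hex
          have h2 := hlT_inr_a_mem hΓ hvY hv' hE hkey hT₀ hu hcu ha' haY' hav'
          have hne : Letter.bar v ≠ a' := fun h => hv' (h ▸ haY')
          have := Finset.one_lt_card.mpr ⟨Letter.bar v, hbv, a', h2, hne⟩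
          omega
        · push_neg at hex
          have hav : a = v := hex a hahl haY
          subst hav
          obtain ⟨z, hzv⟩ := hl_mem_iff.mp hahl
          have hzverts : z ∈ Γ.verts := (hends hΓ _ hzv).1
          obtain ⟨b, hbz, hbne⟩ := hl_other hΓ hvY hv' hzverts (Letter.bar a)
          have hD3 := hlT_inr_z_mem hΓ hvY hv' hE hkey hT₀ hu hcu hzv hbz hbne
          by_cases hbY : b ∈ Y
          · have h2 := hD3.1 hbY
            have := Finset.one_lt_card.mpr ⟨Letter.bar a, hbv, a, h2, (Letter.bar_ne a)⟩
            omega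
          · have h2 := hD3.2 hbY
            have := Finset.one_lt_card.mpr ⟨Letter.bar a, hbv, b, h2, fun h => hbne h.symm⟩
            omega
  · intro hw
    rw [Finset.mem_sdiff] at hw
    obtain ⟨hwS, hwT⟩ := hw
    obtain ⟨x, hxtrim, rfl⟩ := Finset.mem_image.mp hwS
    have hxv := trimset_sub hxtrim
    have hnab := trimset_nabs hΓ hvY hv' hxtrim
    have hxT0 : x ∉ T₀ := fun h => hwT (Finset.mem_image.mpr ⟨x, h, rfl⟩)
    unfold AGraph.IsEndpoint
    constructor
    · simp only [removeSet]
      rw [Finset.mem_sdiff]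
      refine ⟨?_, hwT⟩
      rw [hV]
      exact Finset.mem_image_of_mem F (inl_mem_verts hxv)
    · have hsubv : (removeSet Δ' (T₀.image (fun x => F (Sum.inl x)))).hl (F (Sum.inl x))
          ⊆ {v} := by
        intro b hb
        rcases hlT_inl_sub hΓ hvY hv' hE hkey hT₀ hnab hb hxv with ⟨hbhl, hbY⟩ | ⟨rfl, _⟩
        · exact absurd (trimset_hl_sub hxtrim hbhl) hbY
        · exact Finset.mem_singleton_self _
      calc ((removeSet Δ' (T₀.image (fun x => F (Sum.inl x)))).hl (F (Sum.inl x))).card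
          ≤ ({v} : Finset (Letter A)).card := Finset.card_le_card hsubv
        _ = 1 := Finset.card_singleton v

end Endpoint

end Main

/-- **Gersten's formula.** Let `Γ` be a cyclically reduced `A`-graph, `v ∈ Ã`, `Y` a
`v`-cut of `Ã`, and `φ` the Whitehead automorphism of the second kind specified by `(v, Y)`.
The graph `φ(Γ)` is obtained from `Γ` by replacing each edge by a path labeled by the image
of its label, reducing, and taking the cyclic core; then
`|φ(Γ)| − |Γ| = cap_{W_Γ}(Y) − deg_{W_Γ}(v)`. -/
theorem whitehead_size_formula {V A : Type} [DecidableEq V] [DecidableEq A]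
    (Γ : AGraph V A) (hΓ : Γ.IsCyclRed)
    (v : Letter A) (Y : Finset (Letter A)) (hvY : v ∈ Y) (hbarvY : Letter.bar v ∉ Y)
    (Δ' Δ : AGraph (SV V A) A)
    (hred : AGraph.ReducesTo (whSubst v Y Γ) Δ') (hcore : AGraph.CoreOf Δ' Δ) :
    (Δ.verts.card : ℤ) - (Γ.verts.card : ℤ)
      = (AGraph.cap Γ Y : ℤ) - (AGraph.deg Γ v : ℤ) := by
  classical
  obtain ⟨hchain, hred'⟩ := hred
  obtain ⟨F, hΔ'eq, hFiff⟩ := Gersten.rename_eq_iff_fold hchain hred'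
  have hE : Δ'.edges = (whSubst v Y Γ).edges.image (fun e => (F e.1, e.2.1, F e.2.2)) := by
    rw [hΔ'eq]; rfl
  have hV : Δ'.verts = (whSubst v Y Γ).verts.image F := by
    rw [hΔ'eq]; rfl
  have hkey : ∀ u ∈ (whSubst v Y Γ).verts, ∀ w ∈ (whSubst v Y Γ).verts,
      (F u = F w ↔ cfun Γ v Y u = cfun Γ v Y w) := by
    intro u hu w hw
    constructor
    · intro h
      exact cfun_of_fold hΓ hvY hbarvY ((hFiff u w).1 h)
    · intro h
      rcases vclass hΓ hvY hbarvY hu with ⟨x, hxv, hnab, hcu⟩ | ⟨x, hxv, _, hcu⟩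
      · have hu' : u = Sum.inl x := mem_verts_cfun_inl hΓ hvY hbarvY hcu
        have hw' : w = Sum.inl x := mem_verts_cfun_inl hΓ hvY hbarvY (h.symm.trans hcu)
        rw [hu', hw']
      · have hu' := cfun_eq_inr_v_edge hΓ hvY hbarvY hu hcu
        have hw' := cfun_eq_inr_v_edge hΓ hvY hbarvY hw (h.symm.trans hcu)
        exact (hFiff u w).2 (Gersten.Fold.step v hu' hw' (Gersten.Fold.refl _))
  have hcard1 : Δ'.verts.card = (nabs Γ v).card + (meetY Γ Y).card := by
    rw [hV, Gersten.card_image_eq_of_iff hkey, card_image_cfun hΓ hvY hbarvY]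
  set S := (trimset Γ Y).image (fun x => F (Sum.inl x)) with hS
  have hScard : S.card = (trimset Γ Y).card := by
    rw [hS]
    apply Finset.card_image_of_injOn
    intro x hx x' hx' hFeq
    have h1 := (hkey (Sum.inl x) (inl_mem_verts (trimset_sub hx))
      (Sum.inl x') (inl_mem_verts (trimset_sub hx'))).1 hFeq
    rw [cfun_inl_nabs (trimset_nabs hΓ hvY hbarvY hx),
      cfun_inl_nabs (trimset_nabs hΓ hvY hbarvY hx')] at h1
    exact Sum.inl_injective h1
  have hSsub : S ⊆ Δ'.verts := by
    intro w hw
    obtain ⟨x, hx, rfl⟩ := Finset.mem_image.mp hw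
    rw [hV]
    exact Finset.mem_image_of_mem F (inl_mem_verts (trimset_sub hx))
  have hend : ∀ T ⊆ S, ∀ w, (removeSet Δ' T).IsEndpoint w ↔ w ∈ S \ T := by
    intro T hT w
    have hT₀sub : (trimset Γ Y).filter (fun x => F (Sum.inl x) ∈ T) ⊆ trimset Γ Y :=
      Finset.filter_subset _ _
    have hTeq : T = ((trimset Γ Y).filter (fun x => F (Sum.inl x) ∈ T)).image
        (fun x => F (Sum.inl x)) := by
      ext w'
      simp only [Finset.mem_image, Finset.mem_filter]
      constructor
      · intro hw'
        obtain ⟨x, hx, rfl⟩ := Finset.mem_image.mp (hT hw')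
        exact ⟨x, ⟨hx, hw'⟩, rfl⟩
      · rintro ⟨x, ⟨hx, hxT⟩, rfl⟩
        exact hxT
    rw [hTeq, hS]
    exact endpoint_iff hΓ hvY hbarvY hE hV hkey hT₀sub w
  have hcc := core_card S hSsub hend hcore
  have e3 := nabs_card (Γ := Γ) (v := v) hΓ
  have e4 := meetY_card (Γ := Γ) (Y := Y)
  rw [hScard, hcard1, e4] at hcc
  omega
end

section
/- The endomorphism of the free group F(a,b) determined by a ↦ ab, b ↦ b (call it α) and the one determined by a ↦ a, b ↦ ba (call it β) are automorphisms, and for all n, the word length of (β∘α)^n(a) is the sum of the entries of the first column of the matrix [[2,1],[1,1]]^n, and the word length of (β∘α)^n(b) is the sum of the entries of the second column; in particular these lengths grow exponentially in n, at rate ((3+√5)/2)^n. -/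
namespace BetaAlphaAux

/-- substitution on positive letters induced by β∘α : a ↦ aba, b ↦ ba -/
def sub : Fin 2 → List (Fin 2) := ![[0,1,0],[1,0]]

/-- iterated substitution words -/
def Sn : ℕ → Fin 2 → List (Fin 2)
  | 0, i => [i]
  | n+1, i => (Sn n i).flatMap sub

/-- positive word as free group element -/
def toF (l : List (Fin 2)) : FreeGroup (Fin 2) := (l.map FreeGroup.of).prod

lemma toF_eq_mk (l : List (Fin 2)) : toF l = FreeGroup.mk (l.map (fun i => (i, true))) := by
  induction l with
  | nil => simp [toF, FreeGroup.one_eq_mk]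
  | cons x l ih =>
    simp only [toF, List.map_cons, List.prod_cons] at *
    rw [ih, show FreeGroup.of x = FreeGroup.mk [(x, true)] from rfl, FreeGroup.mul_mk]
    rfl

lemma reduce_pos (l : List (Fin 2 × Bool)) (h : ∀ p ∈ l, p.2 = true) :
    FreeGroup.reduce l = l := by
  induction l with
  | nil => rfl
  | cons x l ih =>
    rw [FreeGroup.reduce.cons, ih (fun p hp => h p (List.mem_cons_of_mem _ hp))]
    cases l with
    | nil => rfl
    | cons y t =>
      have hx : x.2 = true := h x List.mem_cons_self
      have hy : y.2 = true := h y (by simp)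
      simp [hx, hy]

lemma norm_toF (l : List (Fin 2)) : (toF l).norm = l.length := by
  rw [toF_eq_mk, FreeGroup.norm, FreeGroup.toWord_mk, reduce_pos]
  · simp
  · intro p hp; obtain ⟨a, _, rfl⟩ := List.mem_map.1 hp; rfl

lemma length_eq_count (l : List (Fin 2)) : l.length = l.count 0 + l.count 1 := by
  induction l with
  | nil => rfl
  | cons x l ih => fin_cases x <;> simp [List.count_cons, ih] <;> omega

lemma count_flatMap (l : List (Fin 2)) :
    (l.flatMap sub).count 0 = 2 * l.count 0 + l.count 1 ∧
    (l.flatMap sub).count 1 = l.count 0 + l.count 1 := by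
  induction l with
  | nil => simp
  | cons x l ih =>
    have c00 : (sub 0).count 0 = 2 := by decide
    have c01 : (sub 0).count 1 = 1 := by decide
    have c10 : (sub 1).count 0 = 1 := by decide
    have c11 : (sub 1).count 1 = 1 := by decide
    rw [List.flatMap_cons]
    fin_cases x <;>
      simp only [List.count_append, List.count_cons, ih.1, ih.2, c00, c01, c10, c11] <;>
      simp <;> omega

local notation "M" => (!![2, 1; 1, 1] : Matrix (Fin 2) (Fin 2) ℕ)

lemma pow_entry (n : ℕ) (i j : Fin 2) :
    (M ^ (n+1)) i j = (if i = 0 then 2 * (M ^ n) 0 j + (M ^ n) 1 j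
      else (M ^ n) 0 j + (M ^ n) 1 j) := by
  rw [pow_succ']
  fin_cases i <;> simp [Matrix.mul_apply, Fin.sum_univ_succ]

lemma pow_entry' (n : ℕ) (i j : Fin 2) :
    (M ^ (n+1)) i j = (if j = 0 then 2 * (M ^ n) i 0 + (M ^ n) i 1
      else (M ^ n) i 0 + (M ^ n) i 1) := by
  rw [pow_succ]
  fin_cases j <;> simp [Matrix.mul_apply, Fin.sum_univ_succ] <;> ring

lemma counts (n : ℕ) :
    (Sn n 0).count 0 = (M ^ n) 0 0 ∧ (Sn n 0).count 1 = (M ^ n) 1 0 ∧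
    (Sn n 1).count 0 = (M ^ n) 0 1 ∧ (Sn n 1).count 1 = (M ^ n) 1 1 := by
  induction n with
  | zero => simp [Sn, List.count_cons]
  | succ n ih =>
    obtain ⟨h1, h2, h3, h4⟩ := ih
    refine ⟨?_, ?_, ?_, ?_⟩ <;>
      rw [show Sn (n+1) = fun i => (Sn n i).flatMap sub from rfl] <;>
      simp only [(count_flatMap _).1, (count_flatMap _).2, pow_entry, h1, h2, h3, h4] <;>
      norm_num

lemma length_Sn (n : ℕ) :
    (Sn n 0).length = (M ^ n) 0 0 + (M ^ n) 1 0 ∧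
    (Sn n 1).length = (M ^ n) 0 1 + (M ^ n) 1 1 := by
  obtain ⟨h1, h2, h3, h4⟩ := counts n
  constructor <;> rw [length_eq_count] <;> omega

def αe : FreeGroup (Fin 2) ≃* FreeGroup (Fin 2) :=
  MonoidHom.toMulEquiv
    (FreeGroup.lift ![FreeGroup.of 0 * FreeGroup.of 1, FreeGroup.of 1])
    (FreeGroup.lift ![FreeGroup.of 0 * (FreeGroup.of 1)⁻¹, FreeGroup.of 1])
    (by ext i; fin_cases i <;> simp)
    (by ext i; fin_cases i <;> simp)

def βe : FreeGroup (Fin 2) ≃* FreeGroup (Fin 2) :=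
  MonoidHom.toMulEquiv
    (FreeGroup.lift ![FreeGroup.of 0, FreeGroup.of 1 * FreeGroup.of 0])
    (FreeGroup.lift ![FreeGroup.of 0, FreeGroup.of 1 * (FreeGroup.of 0)⁻¹])
    (by ext i; fin_cases i <;> simp)
    (by ext i; fin_cases i <;> simp)

lemma αe0 : αe (FreeGroup.of 0) = FreeGroup.of 0 * FreeGroup.of 1 := by simp [αe]
lemma αe1 : αe (FreeGroup.of 1) = FreeGroup.of 1 := by simp [αe]
lemma βe0 : βe (FreeGroup.of 0) = FreeGroup.of 0 := by simp [βe]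
lemma βe1 : βe (FreeGroup.of 1) = FreeGroup.of 1 * FreeGroup.of 0 := by simp [βe]

lemma phi_toF (l : List (Fin 2)) : βe (αe (toF l)) = toF (l.flatMap sub) := by
  induction l with
  | nil => simp [toF]
  | cons x l ih =>
    rw [show toF (x :: l) = FreeGroup.of x * toF l from by simp [toF],
      List.flatMap_cons, show toF (sub x ++ l.flatMap sub) = toF (sub x) * toF (l.flatMap sub)
        from by simp [toF], map_mul, map_mul, ih]
    congr 1
    fin_cases x
    · show βe (αe (FreeGroup.of 0)) = toF (sub 0)
      rw [αe0, map_mul, βe0, βe1]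
      simp [toF, sub, mul_assoc]
    · show βe (αe (FreeGroup.of 1)) = toF (sub 1)
      rw [αe1, βe1]
      simp [toF, sub]

lemma iterate_eq (n : ℕ) (i : Fin 2) :
    (fun u => βe (αe u))^[n] (FreeGroup.of i) = toF (Sn n i) := by
  induction n with
  | zero => simp [Sn, toF]
  | succ n ih =>
    rw [Function.iterate_succ_apply', ih]
    exact phi_toF _

noncomputable def lam : ℝ := (3 + Real.sqrt 5) / 2

lemma sqrt5_sq : Real.sqrt 5 ^ 2 = 5 := Real.sq_sqrt (by norm_num)

lemma two_le_sqrt5 : (2:ℝ) ≤ Real.sqrt 5 := by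
  have h4 : Real.sqrt 4 = 2 := by
    rw [show (4:ℝ) = 2^2 by norm_num, Real.sqrt_sq (by norm_num)]
  calc (2:ℝ) = Real.sqrt 4 := h4.symm
    _ ≤ Real.sqrt 5 := Real.sqrt_le_sqrt (by norm_num)

lemma lam_gt : (2:ℝ) < lam := by
  have := two_le_sqrt5; rw [lam]; linarith

lemma lam_sq : lam ^ 2 = 3 * lam - 1 := by
  have := sqrt5_sq; rw [lam]; ring_nf; nlinarith [sqrt5_sq]

lemma bounds (f g : ℕ → ℝ) (hf0 : f 0 = 1) (hg0 : g 0 = 1)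
    (hf : ∀ n, f (n+1) = 2 * f n + g n) (hg : ∀ n, g (n+1) = f n + g n) :
    ∀ n, lam ^ n ≤ f n ∧ lam ^ n / (lam - 1) ≤ g n ∧
      f n ≤ (lam - 1) * lam ^ n ∧ g n ≤ lam ^ n := by
  have h2 := lam_gt
  have hsq := lam_sq
  have h1 : (1:ℝ) < lam - 1 := by linarith
  intro n
  induction n with
  | zero =>
    rw [hf0, hg0]
    refine ⟨by norm_num, ?_, by norm_num; linarith, by norm_num⟩
    rw [pow_zero, div_le_one (by linarith)]; linarith
  | succ n ih =>
    obtain ⟨i1, i2, i3, i4⟩ := ih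
    have hp : (0:ℝ) < lam ^ n := by positivity
    refine ⟨?_, ?_, ?_, ?_⟩
    · rw [hf, pow_succ]
      have : lam ^ n * lam = 2 * lam ^ n + lam ^ n / (lam - 1) := by
        field_simp; nlinarith
      linarith
    · rw [hg, pow_succ]
      have : lam ^ n * lam / (lam - 1) = lam ^ n + lam ^ n / (lam - 1) := by
        field_simp; ring
      linarith
    · rw [hf, pow_succ]
      have : (lam - 1) * (lam ^ n * lam) = 2 * ((lam - 1) * lam ^ n) + lam ^ n := by
        nlinarith
      linarith
    · rw [hg, pow_succ]
      have : lam ^ n * lam = (lam - 1) * lam ^ n + lam ^ n := by ring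
      linarith

end BetaAlphaAux

open BetaAlphaAux in
/-- The endomorphisms `α : a ↦ ab, b ↦ b` and `β : a ↦ a, b ↦ ba` of the free group
`F(a,b)` are automorphisms; the word length of `(β∘α)^n(a)` is the sum of the entries of
the first column of `[[2,1],[1,1]]^n`, and that of `(β∘α)^n(b)` is the sum of the entries
of the second column; in particular both grow exponentially in `n`, at rate
`((3+√5)/2)^n`. -/
theorem beta_alpha_iterate_length :
    ∃ α β : FreeGroup (Fin 2) ≃* FreeGroup (Fin 2),
      α (FreeGroup.of 0) = FreeGroup.of 0 * FreeGroup.of 1 ∧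
      α (FreeGroup.of 1) = FreeGroup.of 1 ∧
      β (FreeGroup.of 0) = FreeGroup.of 0 ∧
      β (FreeGroup.of 1) = FreeGroup.of 1 * FreeGroup.of 0 ∧
      (∀ n : ℕ,
        (((fun u => β (α u))^[n] (FreeGroup.of 0)).norm
            = (!![2, 1; 1, 1] ^ n : Matrix (Fin 2) (Fin 2) ℕ) 0 0
              + (!![2, 1; 1, 1] ^ n : Matrix (Fin 2) (Fin 2) ℕ) 1 0) ∧
        (((fun u => β (α u))^[n] (FreeGroup.of 1)).norm
            = (!![2, 1; 1, 1] ^ n : Matrix (Fin 2) (Fin 2) ℕ) 0 1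
              + (!![2, 1; 1, 1] ^ n : Matrix (Fin 2) (Fin 2) ℕ) 1 1)) ∧
      ∃ c C : ℝ, 0 < c ∧ ∀ n : ℕ,
        c * ((3 + Real.sqrt 5) / 2) ^ n
            ≤ (((fun u => β (α u))^[n] (FreeGroup.of 0)).norm : ℝ) ∧
        (((fun u => β (α u))^[n] (FreeGroup.of 0)).norm : ℝ)
            ≤ C * ((3 + Real.sqrt 5) / 2) ^ n ∧
        c * ((3 + Real.sqrt 5) / 2) ^ n
            ≤ (((fun u => β (α u))^[n] (FreeGroup.of 1)).norm : ℝ) ∧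
        (((fun u => β (α u))^[n] (FreeGroup.of 1)).norm : ℝ)
            ≤ C * ((3 + Real.sqrt 5) / 2) ^ n := by
  refine ⟨αe, βe, αe0, αe1, βe0, βe1, ?_, ?_⟩
  · intro n
    rw [iterate_eq n 0, iterate_eq n 1, norm_toF, norm_toF]
    exact length_Sn n
  · -- exponential bounds
    set Mn : ℕ → Matrix (Fin 2) (Fin 2) ℕ := fun n => !![2, 1; 1, 1] ^ n with hMn
    set f : ℕ → ℝ := fun n => ((Mn n 0 0 + Mn n 1 0 : ℕ) : ℝ) with hfdef
    set g : ℕ → ℝ := fun n => ((Mn n 0 1 + Mn n 1 1 : ℕ) : ℝ) with hgdef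
    have hf0 : f 0 = 1 := by simp [hfdef, hMn, Matrix.one_apply]
    have hg0 : g 0 = 1 := by simp [hgdef, hMn, Matrix.one_apply]
    have hf : ∀ n, f (n+1) = 2 * f n + g n := by
      intro n
      simp only [hfdef, hgdef, hMn, pow_entry']
      push_cast
      norm_num
      ring
    have hg : ∀ n, g (n+1) = f n + g n := by
      intro n
      simp only [hfdef, hgdef, hMn, pow_entry']
      push_cast
      norm_num
      ring
    have hb := bounds f g hf0 hg0 hf hg
    have h2 := lam_gt
    have hlam : lam = (3 + Real.sqrt 5) / 2 := rfl
    refine ⟨1 / (lam - 1), lam - 1, div_pos one_pos (by linarith), ?_⟩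
    intro n
    obtain ⟨b1, b2, b3, b4⟩ := hb n
    have hnorm0 : (((fun u => βe (αe u))^[n] (FreeGroup.of 0)).norm : ℝ) = f n := by
      rw [iterate_eq n 0, norm_toF, (length_Sn n).1]
    have hnorm1 : (((fun u => βe (αe u))^[n] (FreeGroup.of 1)).norm : ℝ) = g n := by
      rw [iterate_eq n 1, norm_toF, (length_Sn n).2]
    have hp : (0:ℝ) < lam ^ n := by positivity
    have h1 : (1:ℝ) < lam - 1 := by linarith
    rw [hnorm0, hnorm1, ← hlam]
    refine ⟨?_, ?_, ?_, ?_⟩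
    · have : 1 / (lam - 1) * lam ^ n ≤ lam ^ n := by
        rw [div_mul_eq_mul_div, div_le_iff₀ (by linarith)]
        nlinarith
      linarith
    · exact b3
    · have : 1 / (lam - 1) * lam ^ n = lam ^ n / (lam - 1) := by ring
      linarith
    · nlinarith
end
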